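/- arXiv:1608.08930 — 3 statements merged into one kernel-verified Lean document; each statement's English description precedes it below -/
import Mathlib

section
/- Let y be the reference deformation y_α(ξ) = ξ + p_α and let G be the identity matrix I_{d×d} when n = d (resp. the n×d matrix with upper block I_{d×d} and zero last row when n = d+1, with each p_α embedded in ℝ^n by appending a zero component). Then the following two conditions are equivalent: (i) ∂_p Ŵ(G, p) = 0, i.e. the gradient of p ↦ V̂((Gρ + p_β − p_α)_{(ραβ)∈R}) vanishes at the reference shifts; (ii) Σ_{ξ∈L} Σ_{(ραβ)∈R} V̂_{,(ραβ)}(Dy(ξ)) · D_{(ραβ)}v(ξ) = 0 for every v ∈ 𝒰_0. -/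
open scoped BigOperators
noncomputable section

/-- Lattice indices: `ξ : Fin d → ℤ` labels the lattice site `F ξ ∈ F ℤ^d`. -/
abbrev ZLat (d : ℕ) := Fin d → ℤ

/-- Euclidean vectors. -/
abbrev Vec (m : ℕ) := EuclideanSpace ℝ (Fin m)

/-- Physical position of the lattice site with index `ξ`: `F ξ`. -/
def latpos {d : ℕ} (F : Matrix (Fin d) (Fin d) ℝ) (ξ : ZLat d) : Vec d :=
  WithLp.toLp 2 fun i => ∑ j, F i j * (ξ j : ℝ)

/-- Embedding of `ℝ^d` into `ℝ^n` (`n = d` or `n = d+1`) by appending zeros. -/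
def embedV {d n : ℕ} (x : Vec d) : Vec n :=
  WithLp.toLp 2 fun i => if h : (i : ℕ) < d then x ⟨i, h⟩ else 0

/-- The setting of a multilattice `⋃_α (F ℤ^d + p_α)` together with a finite
interaction range `R` and site potentials `V̂_ξ` (equal to a homogeneous
potential `V̂` outside the defect ball of radius `Rdef`). -/
structure MLSetting (d S n : ℕ) where
  hd : d = 2 ∨ d = 3
  hn : n = d ∨ (d = 2 ∧ n = d + 1)
  hS : 0 < S
  F : Matrix (Fin d) (Fin d) ℝ
  hdetF : F.det = 1
  p : Fin S → Vec d
  hp0 : p ⟨0, hS⟩ = 0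
  R : Finset (ZLat d × Fin S × Fin S)
  hR_noself : ∀ α : Fin S, ((0 : ZLat d), α, α) ∉ R
  hR_span : ∀ α : Fin S,
    Submodule.span ℝ {x : Vec d | ∃ ρ : ZLat d, (ρ, α, α) ∈ R ∧ x = latpos F ρ} = ⊤
  hR_pairs : ∀ α β : Fin S, α ≠ β → ((0 : ZLat d), α, β) ∈ R
  /-- the site potentials `V̂_ξ` -/
  Vsite : ZLat d → ((↥R → Vec n) → ℝ)
  /-- the homogeneous (defect-free) potential `V̂` -/
  Vhom : (↥R → Vec n) → ℝ
  Rdef : ℝ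
  hRdef : 0 < Rdef
  hVsite_hom : ∀ ξ : ZLat d, Rdef ≤ ‖latpos F ξ‖ → Vsite ξ = Vhom
  hV_smooth : ∀ ξ : ZLat d, ContDiff ℝ 4 (Vsite ξ)
  hVhom_smooth : ContDiff ℝ 4 Vhom
  hV_bdd : ∃ C : ℝ, ∀ (ξ : ZLat d) (g : ↥R → Vec n) (j : ℕ), j ≤ 4 →
      ‖iteratedFDeriv ℝ j (Vsite ξ) g‖ ≤ C
  hVhom_bdd : ∃ C : ℝ, ∀ (g : ↥R → Vec n) (j : ℕ), j ≤ 4 →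
      ‖iteratedFDeriv ℝ j Vhom g‖ ≤ C

/-- Multilattice displacements `u = (u_α(ξ))`. -/
abbrev Disp (d S n : ℕ) := ZLat d → Fin S → Vec n

namespace MLSetting

variable {d S n : ℕ} (A : MLSetting d S n)

/-- The index `α = 0` of the base species. -/
def idx0 : Fin S := ⟨0, A.hS⟩

/-- The reference finite differences `D y (ξ) = (F ρ + p_β - p_α)_{(ραβ) ∈ R}`
(independent of `ξ`). -/
def yvec : ↥A.R → Vec n :=
  fun e => embedV (latpos A.F e.1.1 + A.p e.1.2.2 - A.p e.1.2.1)

/-- Finite differences `D_{(ραβ)} u (ξ) = u_β(ξ+ρ) - u_α(ξ)`. -/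
def Dm (u : Disp d S n) (ξ : ZLat d) : ↥A.R → Vec n :=
  fun e => u (ξ + e.1.1) e.1.2.2 - u ξ e.1.2.1

/-- Square of the natural discrete energy norm `‖u‖_{a1}^2`. -/
def a1normSq (u : Disp d S n) : ℝ := ∑' ξ : ZLat d, ∑ e : ↥A.R, ‖A.Dm u ξ e‖ ^ 2

/-- The discrete energy norm `‖u‖_{a1}`. -/
def a1norm (u : Disp d S n) : ℝ := Real.sqrt (A.a1normSq u)

/-- Membership in the energy space `U` (finite energy norm). -/
def FiniteEnergy (u : Disp d S n) : Prop :=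
  Summable (fun ξ : ZLat d => ∑ e : ↥A.R, ‖A.Dm u ξ e‖ ^ 2)

/-- The projection `R_1` of the interaction range onto lattice directions. -/
def R1 : Finset (ZLat d) := A.R.image (fun e => e.1)

/-- Membership in the test space `U_0`: `D u_0` and `u_α - u_0` have compact
support. -/
def InU0 (u : Disp d S n) : Prop :=
  ∃ T : Finset (ZLat d), ∀ ξ : ZLat d, ξ ∉ T →
    (∀ ρ ∈ A.R1, u (ξ + ρ) A.idx0 = u ξ A.idx0) ∧ ∀ α : Fin S, u ξ α = u ξ A.idx0

/-- First variation `⟨δE^a(u), v⟩` of the atomistic energy. -/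
def dE (u v : Disp d S n) : ℝ :=
  ∑' ξ : ZLat d, fderiv ℝ (A.Vsite ξ) (A.yvec + A.Dm u ξ) (A.Dm v ξ)

/-- First variation `⟨δE^a_hom(u), v⟩` of the homogeneous energy. -/
def dEhom (u v : Disp d S n) : ℝ :=
  ∑' ξ : ZLat d, fderiv ℝ A.Vhom (A.yvec + A.Dm u ξ) (A.Dm v ξ)

/-- Second variation `⟨δ²E^a(u)v, w⟩`. -/
def d2E (u v w : Disp d S n) : ℝ :=
  ∑' ξ : ZLat d, iteratedFDeriv ℝ 2 (A.Vsite ξ) (A.yvec + A.Dm u ξ) ![A.Dm v ξ, A.Dm w ξ]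

/-- Second variation `⟨δ²E^a_hom(u)v, w⟩`. -/
def d2Ehom (u v w : Disp d S n) : ℝ :=
  ∑' ξ : ZLat d, iteratedFDeriv ℝ 2 A.Vhom (A.yvec + A.Dm u ξ) ![A.Dm v ξ, A.Dm w ξ]

/-- Phonon stability of the reference configuration: the reference state is an
equilibrium of `E^a_hom` and `δ²E^a_hom(0)` is coercive w.r.t. `‖·‖_{a1}`. -/
def PhononStable : Prop :=
  (∀ v : Disp d S n, A.InU0 v → A.dEhom 0 v = 0) ∧
  ∃ γ : ℝ, 0 < γ ∧ ∀ v : Disp d S n, A.InU0 v → γ * A.a1normSq v ≤ A.d2Ehom 0 v v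

end MLSetting

/-- Finite difference `D_ρ f(ξ) = f(ξ+ρ) - f(ξ)` of a lattice function. -/
def Dfd {d : ℕ} {E : Type*} [AddCommGroup E] (ρ : ZLat d) (f : ZLat d → E) : ZLat d → E :=
  fun ξ => f (ξ + ρ) - f ξ

/-- Iterated finite difference `D_{ρ⃗} = D_{ρ_1} ⋯ D_{ρ_j}`. -/
def DfdIter {d : ℕ} {E : Type*} [AddCommGroup E] :
    ∀ {j : ℕ}, (Fin j → ZLat d) → (ZLat d → E) → (ZLat d → E)
  | 0, _, f => f
  | (_ + 1), ρs, f => Dfd (ρs 0) (DfdIter (fun i => ρs i.succ) f)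

open Matrix in
lemma exists_int_basis {d S n : ℕ} (A : MLSetting d S n) :
    ∃ b : Fin d → ZLat d, (∀ j, (b j, A.idx0, A.idx0) ∈ A.R) ∧
      (Matrix.of fun i j => b j i : Matrix (Fin d) (Fin d) ℤ).det ≠ 0 := by
  classical
  set s := {x : Vec d | ∃ ρ : ZLat d, (ρ, A.idx0, A.idx0) ∈ A.R ∧ x = latpos A.F ρ} with hs
  have hspan : Submodule.span ℝ s = ⊤ := A.hR_span A.idx0
  obtain ⟨t, hts, htspan, hli⟩ := exists_linearIndependent ℝ s
  have htop : Submodule.span ℝ t = ⊤ := htspan.trans hspan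
  have hfin : t.Finite := hli.setFinite
  haveI : Fintype t := hfin.fintype
  let bas : Module.Basis t ℝ (Vec d) := Module.Basis.mk hli (by
    rw [Subtype.range_coe, htop])
  have hcard : Fintype.card t = d := by
    have h1 := Module.finrank_eq_card_basis bas
    rw [finrank_euclideanSpace_fin] at h1
    omega
  let e : t ≃ Fin d := Fintype.equivFinOfCardEq hcard
  have hvecs_mem : ∀ j : Fin d, (↑(e.symm j) : Vec d) ∈ s := fun j => hts (e.symm j).2
  have hvecs_li : LinearIndependent ℝ (fun j : Fin d => (↑(e.symm j) : Vec d)) :=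
    hli.comp e.symm e.symm.injective
  choose b hbR hbeq using hvecs_mem
  refine ⟨b, hbR, ?_⟩
  -- linear independence of the integer vectors cast to ℝ
  set ιb : Fin d → (Fin d → ℝ) := fun j i => (b j i : ℝ) with hιb
  have hlatpos : ∀ j, latpos A.F (b j) =
      (WithLp.linearEquiv 2 ℝ (Fin d → ℝ)).symm (A.F.mulVec (ιb j)) := by
    intro j
    refine PiLp.ext fun i => ?_
    show latpos A.F (b j) i = (A.F *ᵥ fun k => ((b j k : ℝ))) i
    simp [latpos, Matrix.mulVec, dotProduct, ιb]
  have hΦ : ((WithLp.linearEquiv 2 ℝ (Fin d → ℝ)).symm.toLinearMap.comp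
      (Matrix.toLin' A.F)) ∘ ιb = fun j : Fin d => (↑(e.symm j) : Vec d) := by
    funext j
    simp only [Function.comp, LinearMap.comp_apply, Matrix.toLin'_apply,
      LinearEquiv.coe_toLinearMap]
    rw [hbeq j, hlatpos j]
  have hli2 : LinearIndependent ℝ ιb := LinearIndependent.of_comp _ (hΦ ▸ hvecs_li)
  intro hdet
  have hdetR : ((Matrix.of fun i j => b j i : Matrix (Fin d) (Fin d) ℤ).map
      (Int.cast : ℤ → ℝ)).det = 0 := by
    have h := RingHom.map_det (Int.castRingHom ℝ) (Matrix.of fun i j => b j i)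
    rw [hdet] at h
    simpa [RingHom.mapMatrix_apply] using h.symm
  obtain ⟨v, hv0, hmv⟩ := (Matrix.exists_mulVec_eq_zero_iff).mpr hdetR
  have hsum : ∑ j, v j • ιb j = 0 := by
    funext i
    have := congrFun hmv i
    simpa [Matrix.mulVec, dotProduct, Finset.sum_apply, mul_comm, ιb] using this
  exact hv0 (funext fun j => Fintype.linearIndependent_iff.mp hli2 v hsum j)

lemma sum_eq_of_support_subset' {d : ℕ} {E : Type*} [AddCommMonoid E] (F : ZLat d → E)
    {s Ω : Finset (ZLat d)} (hsupp : ∀ ξ, F ξ ≠ 0 → ξ ∈ s) (hsΩ : s ⊆ Ω) :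
    ∑ ξ ∈ Ω, F ξ = ∑ ξ ∈ s, F ξ :=
  (Finset.sum_subset hsΩ fun ξ _ hξ => not_not.mp (mt (hsupp ξ) hξ)).symm

lemma sum_shift' {d : ℕ} {E : Type*} [AddCommMonoid E] (F : ZLat d → E) (ρ : ZLat d)
    {s Ω : Finset (ZLat d)} (hsupp : ∀ ξ, F ξ ≠ 0 → ξ ∈ s)
    (hs : ∀ ξ ∈ s, ξ - ρ ∈ Ω) :
    ∑ ξ ∈ Ω, F (ξ + ρ) = ∑ ξ ∈ s, F ξ := by
  have hinj : ∀ x ∈ Ω, ∀ y ∈ Ω, x + ρ = y + ρ → x = y := fun x _ y _ h => by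
    have := congrArg (fun z => z - ρ) h
    simpa using this
  rw [← Finset.sum_image (f := F) (g := fun ξ => ξ + ρ) hinj]
  exact sum_eq_of_support_subset' F hsupp fun ξ hξ =>
    Finset.mem_image.mpr ⟨ξ - ρ, hs ξ hξ, by abel⟩

lemma walk_good {d : ℕ} {E : Type*} (f : ZLat d → E) (T : Finset (ZLat d)) (ρ : ZLat d)
    (hinv : ∀ ξ, ξ ∉ T → f (ξ + ρ) = f ξ)
    (Good : ZLat d → Prop) (hT : ∀ ξ, Good ξ → ξ ∉ T)
    (hstep : ∀ ξ, Good ξ → Good (ξ + ρ)) :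
    ∀ (m : ℕ) (ξ : ZLat d), Good ξ → f (ξ + m • ρ) = f ξ ∧ Good (ξ + m • ρ) := by
  intro m
  induction m with
  | zero => intro ξ h; rw [zero_nsmul, add_zero]; exact ⟨rfl, h⟩
  | succ m ih =>
    intro ξ h
    obtain ⟨h1, h2⟩ := ih ξ h
    have harr : ξ + (m + 1) • ρ = (ξ + m • ρ) + ρ := by
      rw [succ_nsmul, ← add_assoc]
    refine ⟨?_, ?_⟩
    · rw [harr, hinv _ (hT _ h2), h1]
    · rw [harr]; exact hstep _ h2

lemma embedV_add {d n : ℕ} (x y : Vec d) :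
    (embedV (x + y) : Vec n) = embedV x + embedV y := by
  refine PiLp.ext fun i => ?_
  by_cases h : (i : ℕ) < d <;> simp [embedV, h]

lemma embedV_sub {d n : ℕ} (x y : Vec d) :
    (embedV (x - y) : Vec n) = embedV x - embedV y := by
  refine PiLp.ext fun i => ?_
  by_cases h : (i : ℕ) < d <;> simp [embedV, h]

lemma fderiv_char {d S n : ℕ} (A : MLSetting d S n) :
    (fderiv ℝ
        (fun q : Fin S → Vec n =>
          A.Vhom (fun e => embedV (latpos A.F e.1.1) + q e.1.2.2 - q e.1.2.1))
        (fun α => embedV (A.p α)) = 0)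
      ↔ ∀ w : Fin S → Vec n,
        fderiv ℝ A.Vhom A.yvec (fun e => w e.1.2.2 - w e.1.2.1) = 0 := by
  classical
  set q₀ : Fin S → Vec n := fun α => embedV (A.p α) with hq₀
  let Ψlin : (Fin S → Vec n) →ₗ[ℝ] (↥A.R → Vec n) :=
    { toFun := fun q e => q e.1.2.2 - q e.1.2.1
      map_add' := by intro x y; funext e; simp [Pi.add_apply]; abel
      map_smul' := by intro cc x; funext e; simp [smul_sub] }
  let Ψ : (Fin S → Vec n) →L[ℝ] (↥A.R → Vec n) := Ψlin.toContinuousLinearMap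
  have hΨapp : ∀ q : Fin S → Vec n, Ψ q = fun e => q e.1.2.2 - q e.1.2.1 := fun q => rfl
  have hkey : (fun e : ↥A.R => embedV (latpos A.F e.1.1) + q₀ e.1.2.2 - q₀ e.1.2.1) = A.yvec := by
    funext e
    show embedV (latpos A.F e.1.1) + embedV (A.p e.1.2.2) - embedV (A.p e.1.2.1)
      = embedV (latpos A.F e.1.1 + A.p e.1.2.2 - A.p e.1.2.1)
    rw [embedV_sub, embedV_add]
  have hinner : HasFDerivAt (fun q : Fin S → Vec n =>
      (fun e : ↥A.R => embedV (latpos A.F e.1.1) + q e.1.2.2 - q e.1.2.1)) Ψ q₀ := by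
    have heq : (fun q : Fin S → Vec n =>
        (fun e : ↥A.R => embedV (latpos A.F e.1.1) + q e.1.2.2 - q e.1.2.1))
        = fun q => (fun e : ↥A.R => embedV (latpos A.F e.1.1)) + Ψ q := by
      funext q
      funext e
      rw [Pi.add_apply, hΨapp, add_sub_assoc]
    rw [heq]
    exact (Ψ.hasFDerivAt).const_add _
  have hV : HasFDerivAt A.Vhom (fderiv ℝ A.Vhom A.yvec)
      ((fun e : ↥A.R => embedV (latpos A.F e.1.1) + q₀ e.1.2.2 - q₀ e.1.2.1)) := by
    rw [hkey]
    exact ((A.hVhom_smooth.differentiable (by norm_num)).differentiableAt).hasFDerivAt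
  have hcomp := hV.comp q₀ hinner
  have hfd : fderiv ℝ
      (fun q : Fin S → Vec n =>
        A.Vhom (fun e => embedV (latpos A.F e.1.1) + q e.1.2.2 - q e.1.2.1)) q₀
      = (fderiv ℝ A.Vhom A.yvec).comp Ψ := hcomp.fderiv
  rw [hfd]
  constructor
  · intro h w
    have := ContinuousLinearMap.ext_iff.mp h w
    rw [ContinuousLinearMap.comp_apply, hΨapp] at this
    simpa using this
  · intro h
    ext w
    rw [ContinuousLinearMap.comp_apply, hΨapp]
    simpa using h w

/-- Lemma: shift equilibrium is equivalent to lattice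
equilibrium.  With `G` the (embedded) identity strain and `Ŵ(G,p) =
V̂((Gρ + p_β − p_α)_{(ραβ)∈R})` the Cauchy–Born density, the vanishing of
`∂_p Ŵ(G, p)` at the reference shifts is equivalent to
`Σ_ξ Σ_{(ραβ)∈R} V̂_{,(ραβ)}(Dy(ξ)) · D_{(ραβ)}v(ξ) = 0` for all `v ∈ 𝒰_0`. -/
theorem shift_equilibrium_iff_lattice_equilibrium {d S n : ℕ}
    (A : MLSetting d S n) :
    (fderiv ℝ
        (fun q : Fin S → Vec n =>
          A.Vhom (fun e => embedV (latpos A.F e.1.1) + q e.1.2.2 - q e.1.2.1))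
        (fun α => embedV (A.p α)) = 0)
      ↔ (∀ v : Disp d S n, A.InU0 v → A.dEhom 0 v = 0) := by
  classical
  rw [fderiv_char A]
  set L := fderiv ℝ A.Vhom A.yvec with hLdef
  have hDm0 : ∀ ξ : ZLat d, A.Dm (0 : Disp d S n) ξ = 0 := by
    intro ξ; funext e; show (0 : Disp d S n) (ξ + e.1.1) e.1.2.2 - (0 : Disp d S n) ξ e.1.2.1 = 0
    simp
  have hterm : ∀ (v : Disp d S n) (ξ : ZLat d),
      fderiv ℝ A.Vhom (A.yvec + A.Dm 0 ξ) (A.Dm v ξ) = L (A.Dm v ξ) := by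
    intro v ξ; rw [hDm0, add_zero]
  constructor
  · intro hW v hv
    obtain ⟨T, hT⟩ := hv
    obtain ⟨b, hbR, hbdet⟩ := exists_int_basis A
    set B : Matrix (Fin d) (Fin d) ℤ := Matrix.of fun i j => b j i with hB
    set D : ℤ := B.det with hD
    have hDne : D ≠ 0 := hbdet
    have hDabs : 1 ≤ |D| := Int.one_le_abs hDne
    set κ : ZLat d → ZLat d := fun ξ => B.adjugate.mulVec ξ with hκ
    have hκadd : ∀ x y, κ (x + y) = κ x + κ y := fun x y => Matrix.mulVec_add _ x y
    have hκzero : κ 0 = 0 := Matrix.mulVec_zero _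
    have hκnsmul : ∀ (k : ℕ) (x : ZLat d), κ (k • x) = k • κ x := by
      intro k
      induction k with
      | zero => intro x; rw [zero_nsmul, zero_nsmul, hκzero]
      | succ k ih => intro x; rw [succ_nsmul, succ_nsmul, hκadd, ih]
    have hκb : ∀ j : Fin d, κ (b j) = fun i => if i = j then D else 0 := by
      intro j
      funext i
      have h1 : κ (b j) i = (B.adjugate * B) i j := by
        simp [hκ, Matrix.mulVec, dotProduct, Matrix.mul_apply, hB]
      rw [h1, Matrix.adjugate_mul]
      simp [Matrix.smul_apply, Matrix.one_apply, hD]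
    have hκinj : Function.Injective κ := by
      intro x y hxy
      have hx : B.mulVec (κ x) = D • x := by
        rw [hκ, Matrix.mulVec_mulVec, Matrix.mul_adjugate, Matrix.smul_mulVec,
          Matrix.one_mulVec]
      have hy : B.mulVec (κ y) = D • y := by
        rw [hκ, Matrix.mulVec_mulVec, Matrix.mul_adjugate, Matrix.smul_mulVec,
          Matrix.one_mulVec]
      have h2 : D • x = D • y := by rw [← hx, ← hy, hxy]
      exact smul_right_injective (ZLat d) hDne h2
    -- basic data
    set f : ZLat d → Vec n := fun ξ => v ξ A.idx0 with hf
    have hfinv : ∀ ξ, ξ ∉ T → ∀ ρ ∈ A.R1, f (ξ + ρ) = f ξ := fun ξ hξ ρ hρ => (hT ξ hξ).1 ρ hρ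
    set M : ℤ := 1 + ∑ ξ ∈ T, ∑ i, |κ ξ i| with hM
    have hsum_nonneg : (0 : ℤ) ≤ ∑ ξ ∈ T, ∑ i, |κ ξ i| :=
      Finset.sum_nonneg fun _ _ => Finset.sum_nonneg fun _ _ => abs_nonneg _
    have hM1 : 1 ≤ M := by rw [hM]; linarith
    have hTM : ∀ ξ ∈ T, ∀ i, |κ ξ i| < M := by
      intro ξ hξ i
      have h1 : |κ ξ i| ≤ ∑ i', |κ ξ i'| :=
        Finset.single_le_sum (f := fun i' => |κ ξ i'|) (fun _ _ => abs_nonneg _)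
          (Finset.mem_univ i)
      have h2 : ∑ i', |κ ξ i'| ≤ ∑ ξ' ∈ T, ∑ i', |κ ξ' i'| :=
        Finset.single_le_sum (f := fun ξ' => ∑ i', |κ ξ' i'|)
          (fun ξ' _ => Finset.sum_nonneg fun _ _ => abs_nonneg _) hξ
      rw [hM]; linarith
    have hMout : ∀ ξ : ZLat d, (∃ i, M ≤ |κ ξ i|) → ξ ∉ T := by
      rintro ξ ⟨i, hi⟩ hmem
      exact absurd hi (not_le.mpr (hTM ξ hmem i))
    have hd2 : 2 ≤ d := by rcases A.hd with h | h <;> omega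
    set j0 : Fin d := ⟨0, by omega⟩ with hj0
    set j1 : Fin d := ⟨1, by omega⟩ with hj1
    have hj01 : j0 ≠ j1 := by simp [hj0, hj1, Fin.ext_iff]
    have hκstep : ∀ (ξ : ZLat d) (j : Fin d) (m : ℕ) (i : Fin d),
        κ (ξ + m • b j) i = κ ξ i + (m : ℤ) * (if i = j then D else 0) := by
      intro ξ j m i
      rw [hκadd, hκnsmul, hκb]
      simp [Pi.add_apply, nsmul_eq_mul]
    have hbR1 : ∀ j, b j ∈ A.R1 :=
      fun j => Finset.mem_image.mpr ⟨(b j, A.idx0, A.idx0), hbR j, rfl⟩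
    -- the pushing index
    set m₀ : ZLat d → ℕ := fun ξ => (M + |κ ξ j0|).toNat with hm₀
    have hm₀cast : ∀ (ξ : ZLat d) (m : ℕ), m₀ ξ ≤ m → M + |κ ξ j0| ≤ (m : ℤ) := by
      intro ξ m hm
      calc M + |κ ξ j0| ≤ ((m₀ ξ : ℕ) : ℤ) := Int.self_le_toNat _
        _ ≤ (m : ℤ) := by exact_mod_cast hm
    have hpush : ∀ (z : ℤ) (m : ℕ), M + |z| ≤ (m : ℤ) → M ≤ |z + (m : ℤ) * D| := by
      intro z m hm
      have h1 : (m : ℤ) ≤ (m : ℤ) * |D| :=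
        le_mul_of_one_le_right (by positivity) hDabs
      have h2 : |(m : ℤ) * D| - |-z| ≤ |(m : ℤ) * D - -z| := abs_sub_abs_le_abs_sub _ _
      rw [abs_neg, sub_neg_eq_add, abs_mul] at h2
      have h3 : |z + (m : ℤ) * D| = |(m : ℤ) * D + z| := by rw [add_comm]
      rw [h3]
      have h4 : |(m : ℤ)| = (m : ℤ) := abs_of_nonneg (by positivity)
      rw [h4] at h2
      linarith
    -- sign-aware goodness along direction j0
    set SGood : ZLat d → Prop :=
      fun ξ => (0 < D ∧ M ≤ κ ξ j0) ∨ (D < 0 ∧ κ ξ j0 ≤ -M) with hSGoodDef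
    have hSGood_out : ∀ ξ, SGood ξ → M ≤ |κ ξ j0| := by
      rintro ξ (⟨hD', hle⟩ | ⟨hD', hle⟩)
      · exact le_trans hle (le_abs_self _)
      · exact le_abs.mpr (Or.inr (by linarith))
    have hstep1 : ∀ (ξ : ZLat d) (j : Fin d) (i : Fin d),
        κ (ξ + b j) i = κ ξ i + (if i = j then D else 0) := by
      intro ξ j i
      have := hκstep ξ j 1 i
      rw [one_nsmul] at this
      rw [this]
      push_cast
      ring
    have hSGood_step : ∀ ξ, SGood ξ → SGood (ξ + b j0) := by
      intro ξ h
      have hs := hstep1 ξ j0 j0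
      rw [if_pos rfl] at hs
      rcases h with ⟨hD', hle⟩ | ⟨hD', hle⟩
      · exact Or.inl ⟨hD', by rw [hs]; linarith⟩
      · exact Or.inr ⟨hD', by rw [hs]; linarith⟩
    have hSGood_at : ∀ (ξ : ZLat d) (m : ℕ), m₀ ξ ≤ m → SGood (ξ + m • b j0) := by
      intro ξ m hm
      have hc := hκstep ξ j0 m j0
      rw [if_pos rfl] at hc
      have hmZ : M + |κ ξ j0| ≤ (m : ℤ) := hm₀cast ξ m hm
      have habs1 : -|κ ξ j0| ≤ κ ξ j0 := neg_abs_le _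
      have habs2 : κ ξ j0 ≤ |κ ξ j0| := le_abs_self _
      rcases lt_or_gt_of_ne hDne with hneg | hpos
      · refine Or.inr ⟨hneg, ?_⟩
        rw [hc]
        have hDle : D ≤ -1 := by omega
        have : (m : ℤ) * D ≤ (m : ℤ) * (-1) :=
          mul_le_mul_of_nonneg_left hDle (by positivity)
        linarith
      · refine Or.inl ⟨hpos, ?_⟩
        rw [hc]
        have hDge : 1 ≤ D := by omega
        have : (m : ℤ) * 1 ≤ (m : ℤ) * D :=
          mul_le_mul_of_nonneg_left hDge (by positivity)
        linarith
    -- the asymptotic value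
    set c : ZLat d → Vec n := fun ξ => f (ξ + m₀ ξ • b j0) with hc
    have hwalk0 : ∀ (ξ : ZLat d) (k : ℕ), SGood ξ → f (ξ + k • b j0) = f ξ :=
      fun ξ k h => (walk_good f T (b j0) (fun ξ' hξ' => hfinv ξ' hξ' _ (hbR1 j0)) SGood
        (fun ξ' h' => hMout ξ' ⟨j0, hSGood_out ξ' h'⟩) hSGood_step k ξ h).1
    have hcons : ∀ (ξ : ZLat d) (m : ℕ), m₀ ξ ≤ m → f (ξ + m • b j0) = c ξ := by
      intro ξ m hm
      obtain ⟨k, rfl⟩ := Nat.exists_eq_add_of_le hm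
      rw [show ξ + (m₀ ξ + k) • b j0 = (ξ + m₀ ξ • b j0) + k • b j0 by
        rw [add_nsmul, ← add_assoc]]
      exact hwalk0 _ k (hSGood_at ξ (m₀ ξ) le_rfl)
    have hcinv : ∀ (ξ ρ : ZLat d), ρ ∈ A.R1 → c (ξ + ρ) = c ξ := by
      intro ξ ρ hρ
      set m := max (m₀ ξ) (m₀ (ξ + ρ)) with hm
      have h1 : c (ξ + ρ) = f ((ξ + ρ) + m • b j0) := (hcons _ m (le_max_right _ _)).symm
      have h2 : (ξ + ρ) + m • b j0 = (ξ + m • b j0) + ρ := by abel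
      have h3 : f ((ξ + m • b j0) + ρ) = f (ξ + m • b j0) :=
        hfinv _ (hMout _ ⟨j0, hSGood_out _ (hSGood_at ξ m (le_max_left _ _))⟩) ρ hρ
      rw [h1, h2, h3, hcons ξ m (le_max_left _ _)]
    -- eventual agreement of f and c
    have hout : ∀ ξ : ZLat d, (∃ i, M ≤ |κ ξ i|) → f ξ = c ξ := by
      rintro ξ ⟨i, hi⟩
      by_cases hij : i = j0
      · -- detour through direction j1
        subst hij
        set k : ℕ := (M + |κ ξ j1|).toNat with hk
        have hkcast : M + |κ ξ j1| ≤ (k : ℤ) := Int.self_le_toNat _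
        -- leg 1 : from ξ to ξ + k • b j1 (coordinate j0 stays large)
        have leg1 := walk_good f T (b j1) (fun ξ' hξ' => hfinv ξ' hξ' _ (hbR1 j1))
          (fun η => M ≤ |κ η j0|) (fun η h => hMout η ⟨j0, h⟩)
          (fun η h => by
            show M ≤ |κ (η + b j1) j0|
            have hs := hstep1 η j1 j0
            rw [if_neg hj01] at hs
            rw [hs, add_zero]; exact h) k ξ hi
        -- coordinate j1 of the new point is large
        have hη1 : M ≤ |κ (ξ + k • b j1) j1| := by
          have hcc := hκstep ξ j1 k j1
          rw [if_pos rfl] at hcc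
          rw [hcc]
          exact hpush _ k hkcast
        -- leg 2 : push along j0 (coordinate j1 stays large)
        have leg2 := walk_good f T (b j0) (fun ξ' hξ' => hfinv ξ' hξ' _ (hbR1 j0))
          (fun η => M ≤ |κ η j1|) (fun η h => hMout η ⟨j1, h⟩)
          (fun η h => by
            show M ≤ |κ (η + b j0) j1|
            have hs := hstep1 η j0 j1
            rw [if_neg (Ne.symm hj01)] at hs
            rw [hs, add_zero]; exact h) (m₀ ξ) (ξ + k • b j1) hη1
        -- leg 3 : from ξ + m₀ ξ • b j0 back out along j1 (SGood is preserved)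
        have leg3 := walk_good f T (b j1) (fun ξ' hξ' => hfinv ξ' hξ' _ (hbR1 j1)) SGood
          (fun η h => hMout η ⟨j0, hSGood_out η h⟩)
          (fun η h => by
            show SGood (η + b j1)
            have hs := hstep1 η j1 j0
            rw [if_neg hj01] at hs
            rcases h with ⟨hD', hle⟩ | ⟨hD', hle⟩
            · exact Or.inl ⟨hD', by rw [hs, add_zero]; exact hle⟩
            · exact Or.inr ⟨hD', by rw [hs, add_zero]; exact hle⟩)
          k (ξ + m₀ ξ • b j0) (hSGood_at ξ (m₀ ξ) le_rfl)
        have hpt : (ξ + k • b j1) + m₀ ξ • b j0 = (ξ + m₀ ξ • b j0) + k • b j1 := by abel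
        calc f ξ = f (ξ + k • b j1) := leg1.1.symm
          _ = f ((ξ + k • b j1) + m₀ ξ • b j0) := leg2.1.symm
          _ = f ((ξ + m₀ ξ • b j0) + k • b j1) := by rw [hpt]
          _ = f (ξ + m₀ ξ • b j0) := leg3.1
          _ = c ξ := rfl
      · -- direct push along j0, coordinate i stays large
        have hwalk := walk_good f T (b j0) (fun ξ' hξ' => hfinv ξ' hξ' _ (hbR1 j0))
          (fun η => M ≤ |κ η i|) (fun η h => hMout η ⟨i, h⟩)
          (fun η h => by
            show M ≤ |κ (η + b j0) i|
            have hs := hstep1 η j0 i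
            rw [if_neg hij] at hs
            rw [hs, add_zero]; exact h) (m₀ ξ) ξ hi
        exact hwalk.1.symm
    -- the correction g has finite support
    set g : ZLat d → Vec n := fun ξ => f ξ - c ξ with hg
    have hgzero : ∀ ξ : ZLat d, (∃ i, M ≤ |κ ξ i|) → g ξ = 0 := by
      intro ξ h
      rw [hg]
      show f ξ - c ξ = 0
      rw [hout ξ h, sub_self]
    have hfinsupp : Set.Finite {ξ : ZLat d | g ξ ≠ 0} := by
      have hsubset : {ξ : ZLat d | g ξ ≠ 0} ⊆
          κ ⁻¹' (Set.Icc (fun _ : Fin d => -M) (fun _ : Fin d => M)) := by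
        intro ξ hξ
        simp only [Set.mem_preimage, Set.mem_Icc]
        have hbound : ∀ i, |κ ξ i| < M := by
          intro i
          by_contra hcon
          exact hξ (hgzero ξ ⟨i, not_lt.mp hcon⟩)
        constructor
        · intro i
          show -M ≤ κ ξ i
          have h' := abs_lt.mp (hbound i)
          linarith [h'.1]
        · intro i
          show κ ξ i ≤ M
          have h' := abs_lt.mp (hbound i)
          linarith [h'.2]
      exact Set.Finite.subset
        (Set.Finite.preimage (Set.injOn_of_injective hκinj) (Set.finite_Icc _ _)) hsubset
    set K : Finset (ZLat d) := hfinsupp.toFinset with hK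
    have hgsupp : ∀ ξ, g ξ ≠ 0 → ξ ∈ K := fun ξ h => hfinsupp.mem_toFinset.mpr h
    -- species correction
    have husupp : ∀ (α : Fin S) (ξ : ZLat d), v ξ α - f ξ ≠ 0 → ξ ∈ T := by
      intro α ξ hne
      by_contra hcnt
      apply hne
      show v ξ α - f ξ = 0
      rw [(hT ξ hcnt).2 α]
      exact sub_self _
    -- decomposition of the finite differences
    have hdecomp : ∀ (ξ : ZLat d) (e : ↥A.R),
        A.Dm v ξ e = ((v (ξ + e.1.1) e.1.2.2 - f (ξ + e.1.1)) - (v ξ e.1.2.1 - f ξ))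
          + (g (ξ + e.1.1) - g ξ) := by
      intro ξ e
      have hρ1 : e.1.1 ∈ A.R1 := Finset.mem_image.mpr ⟨e.1, e.2, rfl⟩
      have hce : c (ξ + e.1.1) = c ξ := hcinv ξ e.1.1 hρ1
      show v (ξ + e.1.1) e.1.2.2 - v ξ e.1.2.1 = _
      have hge : ∀ η : ZLat d, g η = f η - c η := fun η => rfl
      rw [hge, hge, hce]
      abel
    -- the support of Dm v
    set T' : Finset (ZLat d) := T ∪ A.R1.biUnion (fun ρ => T.image (fun ξ => ξ - ρ)) with hT'
    have hDmzero : ∀ ξ, ξ ∉ T' → A.Dm v ξ = 0 := by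
      intro ξ hξ
      have h1 : ξ ∉ T := fun h => hξ (Finset.mem_union_left _ h)
      have h2 : ∀ ρ ∈ A.R1, ξ + ρ ∉ T := by
        intro ρ hρ hmem
        exact hξ (Finset.mem_union_right _ (Finset.mem_biUnion.mpr
          ⟨ρ, hρ, Finset.mem_image.mpr ⟨ξ + ρ, hmem, by abel⟩⟩))
      funext e
      have hρ1 : e.1.1 ∈ A.R1 := Finset.mem_image.mpr ⟨e.1, e.2, rfl⟩
      show v (ξ + e.1.1) e.1.2.2 - v ξ e.1.2.1 = 0
      rw [(hT _ (h2 _ hρ1)).2, (hT ξ h1).2]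
      show f (ξ + e.1.1) - f ξ = 0
      rw [hfinv ξ h1 _ hρ1, sub_self]
    -- the big summation set
    set Ω : Finset (ZLat d) :=
      (T' ∪ K) ∪ A.R1.biUnion (fun ρ => K.image (fun ξ => ξ - ρ)) with hΩ
    have hT'Ω : T' ⊆ Ω := fun ξ h => Finset.mem_union_left _ (Finset.mem_union_left _ h)
    have hTΩ : T ⊆ Ω := fun ξ h => hT'Ω (Finset.mem_union_left _ h)
    have hKΩ : K ⊆ Ω := fun ξ h => Finset.mem_union_left _ (Finset.mem_union_right _ h)
    have hTs : ∀ ρ ∈ A.R1, ∀ ξ ∈ T, ξ - ρ ∈ Ω := by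
      intro ρ hρ ξ hξ
      exact hT'Ω (Finset.mem_union_right _ (Finset.mem_biUnion.mpr
        ⟨ρ, hρ, Finset.mem_image.mpr ⟨ξ, hξ, rfl⟩⟩))
    have hKs : ∀ ρ ∈ A.R1, ∀ ξ ∈ K, ξ - ρ ∈ Ω := by
      intro ρ hρ ξ hξ
      exact Finset.mem_union_right _ (Finset.mem_biUnion.mpr
        ⟨ρ, hρ, Finset.mem_image.mpr ⟨ξ, hξ, rfl⟩⟩)
    -- reduce the tsum to a finite sum
    have hsum : A.dEhom 0 v = ∑ ξ ∈ Ω, L (A.Dm v ξ) := by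
      rw [MLSetting.dEhom]
      rw [tsum_eq_sum (s := Ω) (fun ξ hξ => by
        rw [hterm, hDmzero ξ (fun h => hξ (hT'Ω h)), map_zero])]
      exact Finset.sum_congr rfl fun ξ _ => hterm v ξ
    rw [hsum, ← map_sum]
    -- total species sums
    set Wt : Fin S → Vec n := fun α => ∑ ξ ∈ T, (v ξ α - f ξ) with hWt
    have hvec : (∑ ξ ∈ Ω, A.Dm v ξ) = (fun e : ↥A.R => Wt e.1.2.2 - Wt e.1.2.1) := by
      funext e
      rw [Finset.sum_apply]
      show _ = Wt e.1.2.2 - Wt e.1.2.1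
      have hρ1 : e.1.1 ∈ A.R1 := Finset.mem_image.mpr ⟨e.1, e.2, rfl⟩
      have hS1 : ∑ ξ ∈ Ω, (v (ξ + e.1.1) e.1.2.2 - f (ξ + e.1.1)) = Wt e.1.2.2 :=
        sum_shift' (fun ξ => v ξ e.1.2.2 - f ξ) e.1.1 (husupp e.1.2.2)
          (fun ξ hξ => hTs _ hρ1 ξ hξ)
      have hS2 : ∑ ξ ∈ Ω, (v ξ e.1.2.1 - f ξ) = Wt e.1.2.1 :=
        sum_eq_of_support_subset' (fun ξ => v ξ e.1.2.1 - f ξ) (husupp e.1.2.1) hTΩ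
      have hS3 : ∑ ξ ∈ Ω, g (ξ + e.1.1) = ∑ ξ ∈ K, g ξ :=
        sum_shift' _ e.1.1 hgsupp (fun ξ hξ => hKs _ hρ1 ξ hξ)
      have hS4 : ∑ ξ ∈ Ω, g ξ = ∑ ξ ∈ K, g ξ :=
        sum_eq_of_support_subset' _ hgsupp hKΩ
      have hsplit : ∑ ξ ∈ Ω, A.Dm v ξ e
          = ((∑ ξ ∈ Ω, (v (ξ + e.1.1) e.1.2.2 - f (ξ + e.1.1)))
              - (∑ ξ ∈ Ω, (v ξ e.1.2.1 - f ξ)))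
            + ((∑ ξ ∈ Ω, g (ξ + e.1.1)) - ∑ ξ ∈ Ω, g ξ) := by
        rw [← Finset.sum_sub_distrib, ← Finset.sum_sub_distrib, ← Finset.sum_add_distrib]
        exact Finset.sum_congr rfl (fun ξ _ => hdecomp ξ e)
      rw [hsplit, hS1, hS2, hS3, hS4]
      abel
    rw [hvec]
    exact hW Wt
  · -- lattice equilibrium implies shift equilibrium
    intro hE w
    set v : Disp d S n := fun ξ α => if ξ = 0 then (w α - w A.idx0) else 0 with hvdef
    have hv0 : ∀ ξ, v ξ A.idx0 = 0 := by
      intro ξ; by_cases h : ξ = 0 <;> simp [v, h]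
    have hU0 : A.InU0 v := by
      refine ⟨{0}, fun ξ hξ => ?_⟩
      have hξ0 : ξ ≠ 0 := by simpa using hξ
      exact ⟨fun ρ _ => by rw [hv0, hv0], fun α => by rw [hv0]; simp [v, hξ0]⟩
    have h := hE v hU0
    set Ω : Finset (ZLat d) := insert 0 (A.R1.image (fun ρ => -ρ)) with hΩ
    have hvsupp : ∀ (α : Fin S) (ξ : ZLat d), v ξ α ≠ 0 → ξ ∈ ({0} : Finset (ZLat d)) := by
      intro α ξ hne
      by_contra hc
      exact hne (by simp [v, by simpa using hc])
    have hDmsupp : ∀ ξ, ξ ∉ Ω → A.Dm v ξ = 0 := by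
      intro ξ hξ
      have h1 : ξ ≠ 0 := fun hc => hξ (by rw [hΩ, hc]; exact Finset.mem_insert_self _ _)
      funext e
      have h2 : ξ + e.1.1 ≠ 0 := by
        intro hc
        apply hξ
        rw [hΩ]
        refine Finset.mem_insert_of_mem (Finset.mem_image.mpr
          ⟨e.1.1, Finset.mem_image.mpr ⟨e.1, e.2, rfl⟩, ?_⟩)
        have : ξ = -e.1.1 := by
          have := congrArg (fun z => z - e.1.1) hc
          simpa using this
        exact this.symm
      show v (ξ + e.1.1) e.1.2.2 - v ξ e.1.2.1 = 0
      simp [v, h1, h2]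
    have hsum : A.dEhom 0 v = ∑ ξ ∈ Ω, L (A.Dm v ξ) := by
      rw [MLSetting.dEhom]
      rw [tsum_eq_sum (s := Ω) (fun ξ hξ => by rw [hterm, hDmsupp ξ hξ, map_zero])]
      exact Finset.sum_congr rfl fun ξ _ => hterm v ξ
    rw [hsum, ← map_sum] at h
    have hvec : (∑ ξ ∈ Ω, A.Dm v ξ) = (fun e : ↥A.R => w e.1.2.2 - w e.1.2.1) := by
      funext e
      rw [Finset.sum_apply]
      have hρ1 : e.1.1 ∈ A.R1 := Finset.mem_image.mpr ⟨e.1, e.2, rfl⟩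
      have hstep : ∀ ξ ∈ Ω, A.Dm v ξ e = v (ξ + e.1.1) e.1.2.2 - v ξ e.1.2.1 :=
        fun ξ _ => rfl
      rw [Finset.sum_congr rfl hstep, Finset.sum_sub_distrib]
      have hA : ∑ ξ ∈ Ω, v (ξ + e.1.1) e.1.2.2 = ∑ ξ ∈ ({0} : Finset (ZLat d)), v ξ e.1.2.2 :=
        sum_shift' _ e.1.1 (hvsupp e.1.2.2) (fun ξ hξ => by
          rw [Finset.mem_singleton] at hξ
          rw [hξ, hΩ]
          exact Finset.mem_insert_of_mem (Finset.mem_image.mpr ⟨e.1.1, hρ1, by abel⟩))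
      have hB : ∑ ξ ∈ Ω, v ξ e.1.2.1 = ∑ ξ ∈ ({0} : Finset (ZLat d)), v ξ e.1.2.1 :=
        sum_eq_of_support_subset' _ (hvsupp e.1.2.1) (by
          intro ξ hξ
          rw [Finset.mem_singleton] at hξ
          rw [hξ, hΩ]; exact Finset.mem_insert_self _ _)
      rw [hA, hB]
      simp only [Finset.sum_singleton]
      have e1 : v 0 e.1.2.2 = w e.1.2.2 - w A.idx0 := by simp [v]
      have e2 : v 0 e.1.2.1 = w e.1.2.1 - w A.idx0 := by simp [v]
      rw [e1, e2]
      abel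
    rw [hvec] at h
    exact h
end
end

section
/- Let Ω = (−1/2, 1/2]^d, N ∈ ℕ, ε = 1/N, Ω_ε = {−1/2+ε, …, 1/2}^d. For periodic fields Z ∈ C³(Ω, ℝ^n) and q_α ∈ C²(Ω, ℝ^n), define z^ε_α(ξ) = Z(ξ) + ε q_α(ξ) for ξ ∈ Ω_ε. Then ⟨δ²E^a_ε(0) z^ε, z^ε⟩ − ⟨δ²E^c_Ω(0)(Z, q), (Z, q)⟩ → 0 as ε → 0, where E^a_ε(u^ε) = ε^d Σ_{ξ∈Ω_ε} V_ξ(D^ε u^ε(ξ)) with D^ε_{(ραβ)}u^ε(ξ) = (u^ε_β(ξ+ερ) − u^ε_α(ξ))/ε (interpreted periodically), and E^c_Ω(U, p) = ∫_Ω V((∇_ρ U(x) + p_β(x) − p_α(x))_{(ραβ)∈R}) dx. -/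
open scoped BigOperators
noncomputable section

namespace MLSetting

variable {d S n : ℕ} (A : MLSetting d S n)

/-- The Cauchy–Born strain `((∇U)ρ + p_β − p_α)_{(ραβ)∈R}` at the point `x`. -/
def cbStrain (Z : Vec d → Vec n) (q : Fin S → Vec d → Vec n) (x : Vec d) :
    ↥A.R → Vec n :=
  fun e => fderiv ℝ Z x (latpos A.F e.1.1) + q e.1.2.2 x - q e.1.2.1 x

/-- The scaled finite differences
`D^ε_{(ραβ)} u^ε(x) = (u^ε_β(x + ερ) − u^ε_α(x))/ε`, `ε = 1/N`, of the
atomistic fields `u^ε_α = U + ε q_α` obtained from continuum fields. -/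
def Deps (N : ℕ) (U : Vec d → Vec n) (q : Fin S → Vec d → Vec n) (x : Vec d) :
    ↥A.R → Vec n :=
  fun e =>
    (N : ℝ) •
      ((U (x + (N : ℝ)⁻¹ • latpos A.F e.1.1)
          + (N : ℝ)⁻¹ • q e.1.2.2 (x + (N : ℝ)⁻¹ • latpos A.F e.1.1))
        - (U x + (N : ℝ)⁻¹ • q e.1.2.1 x))

end MLSetting

/-- The index set of the scaled atomistic domain
`Ω_ε = {-1/2+ε, …, 1/2}^d`, `ε = 1/N`. -/
def gridSet (d : ℕ) (N : ℕ) : Finset (ZLat d) :=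
  Finset.Icc (fun _ => 1) (fun _ => (N : ℤ))

/-- The point `(-1/2 + ε z_1, …, -1/2 + ε z_d)` of `Ω_ε`, `ε = 1/N`. -/
def gridPt {d : ℕ} (N : ℕ) (z : ZLat d) : Vec d :=
  WithLp.toLp 2 fun i => -(1 / 2 : ℝ) + (z i : ℝ) / (N : ℝ)

/-- The continuum domain `Ω = (-1/2, 1/2]^d`. -/
def cubeΩ (d : ℕ) : Set (Vec d) :=
  {x : Vec d | ∀ i, x i ∈ Set.Ioc (-(1 / 2 : ℝ)) (1 / 2 : ℝ)}

/-- The integer vector `m` as an element of `ℝ^d`. -/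
def intVec {d : ℕ} (m : ZLat d) : Vec d := WithLp.toLp 2 fun i => (m i : ℝ)

/-- `1`-periodicity (in each coordinate) of a continuum field. -/
def ZPeriodic {d n : ℕ} (U : Vec d → Vec n) : Prop :=
  ∀ (x : Vec d) (m : ZLat d), U (x + intVec m) = U x

namespace MLSetting

variable {d S n : ℕ} (A : MLSetting d S n)

/-- The scaled atomistic energy
`E^a_ε(u^ε) = ε^d Σ_{ξ∈Ω_ε} V_ξ(D^ε u^ε(ξ))`, `ε = 1/N`, evaluated on the
atomistic fields `u^ε_α = U + ε q_α`. -/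
def Eaeps (N : ℕ) (U : Vec d → Vec n) (q : Fin S → Vec d → Vec n) : ℝ :=
  ((N : ℝ)⁻¹) ^ d *
    ∑ z ∈ gridSet d N,
      (A.Vsite z (A.yvec + A.Deps N U q (gridPt N z)) - A.Vhom A.yvec)

/-- The Cauchy–Born energy on `Ω`:
`E^c_Ω(U,p) = ∫_Ω V((∇_ρ U + p_β − p_α)_{(ραβ)∈R}) dx`. -/
def EcΩ (U : Vec d → Vec n) (q : Fin S → Vec d → Vec n) : ℝ :=
  ∫ x in cubeΩ d, (A.Vhom (A.yvec + A.cbStrain U q x) - A.Vhom A.yvec)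

/-- The second variation `⟨δ²E^a_ε(0) z^ε, z^ε⟩` of the scaled atomistic
energy at the reference state, on the fields `z^ε_α = Z + ε q_α`. -/
def d2Eaeps (N : ℕ) (Z : Vec d → Vec n) (q : Fin S → Vec d → Vec n) : ℝ :=
  ((N : ℝ)⁻¹) ^ d *
    ∑ z ∈ gridSet d N,
      iteratedFDeriv ℝ 2 (A.Vsite z) A.yvec
        ![A.Deps N Z q (gridPt N z), A.Deps N Z q (gridPt N z)]

/-- The second variation `⟨δ²E^c_Ω(0)(Z,q), (Z,q)⟩` of the Cauchy–Born
energy on `Ω` at the reference state. -/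
def d2EcΩ (Z : Vec d → Vec n) (q : Fin S → Vec d → Vec n) : ℝ :=
  ∫ x in cubeΩ d,
    iteratedFDeriv ℝ 2 A.Vhom A.yvec ![A.cbStrain Z q x, A.cbStrain Z q x]

end MLSetting

namespace CBH

open MeasureTheory Filter

variable {d : ℕ}

lemma vec_norm_le_of_coord {x : Vec d} {C : ℝ} (hC : 0 ≤ C)
    (h : ∀ i, |x i| ≤ C) : ‖x‖ ≤ Real.sqrt d * C := by
  rw [EuclideanSpace.norm_eq]
  have hsum : ∑ i, ‖x i‖ ^ 2 ≤ ∑ _i : Fin d, C ^ 2 := by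
    apply Finset.sum_le_sum
    intro i _
    have h1 : ‖x i‖ ≤ C := by rw [Real.norm_eq_abs]; exact h i
    nlinarith [norm_nonneg (x i)]
  calc Real.sqrt (∑ i, ‖x i‖ ^ 2) ≤ Real.sqrt (∑ _i : Fin d, C ^ 2) := Real.sqrt_le_sqrt hsum
    _ = Real.sqrt ((d : ℝ) * C ^ 2) := by simp [Finset.sum_const, mul_comm]
    _ = Real.sqrt d * C := by
        rw [Real.sqrt_mul (by positivity), Real.sqrt_sq hC]

lemma sqrt_d_le : Real.sqrt d ≤ (d : ℝ) + 1 := by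
  have h1 : (d : ℝ) ≤ ((d : ℝ) + 1) ^ 2 := by nlinarith [show (0:ℝ) ≤ d from Nat.cast_nonneg d]
  calc Real.sqrt d ≤ Real.sqrt (((d : ℝ) + 1) ^ 2) := Real.sqrt_le_sqrt h1
    _ = (d : ℝ) + 1 := Real.sqrt_sq (by positivity)

lemma abs_coord_le_norm (x : Vec d) (i : Fin d) : |x i| ≤ ‖x‖ := by
  rw [EuclideanSpace.norm_eq]
  have h1 : |x i| = Real.sqrt (‖x i‖ ^ 2) := by
    rw [Real.sqrt_sq_eq_abs, Real.norm_eq_abs, abs_abs]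
  rw [h1]
  apply Real.sqrt_le_sqrt
  exact Finset.single_le_sum (f := fun j => ‖x j‖ ^ 2) (fun j _ => by positivity)
    (Finset.mem_univ i)

lemma bounded_of_periodic {E : Type*} [NormedAddCommGroup E] {f : Vec d → E}
    (hf : Continuous f) (hper : ∀ (x : Vec d) (m : ZLat d), f (x + intVec m) = f x) :
    ∃ C, 0 ≤ C ∧ ∀ x, ‖f x‖ ≤ C := by
  obtain ⟨x0, _, hx0⟩ := (isCompact_closedBall (0 : Vec d) ((d : ℝ) + 1)).exists_isMaxOn
    ⟨0, by simp; positivity⟩ hf.norm.continuousOn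
  refine ⟨‖f x0‖, norm_nonneg _, fun x => ?_⟩
  set m : ZLat d := fun i => ⌊x i⌋ with hm
  have hx : f x = f (x - intVec m) := by
    have h := hper (x - intVec m) m
    rwa [sub_add_cancel] at h
  rw [hx]
  apply hx0
  rw [Metric.mem_closedBall, dist_zero_right]
  have hcoord : ∀ i, |(x - intVec m) i| ≤ 1 := by
    intro i
    have h1 : (x - intVec m) i = x i - (⌊x i⌋ : ℝ) := by
      simp [intVec, hm]
    rw [h1, abs_le]
    constructor
    · linarith [Int.floor_le (x i), Int.lt_floor_add_one (x i)]
    · linarith [Int.floor_le (x i), Int.lt_floor_add_one (x i)]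
  calc ‖x - intVec m‖ ≤ Real.sqrt d * 1 := vec_norm_le_of_coord zero_le_one hcoord
    _ ≤ (d : ℝ) + 1 := by rw [mul_one]; exact sqrt_d_le

lemma fderiv_periodic {E : Type*} [NormedAddCommGroup E] [NormedSpace ℝ E] {f : Vec d → E}
    (hf : Differentiable ℝ f) (hper : ∀ (x : Vec d) (m : ZLat d), f (x + intVec m) = f x)
    (x : Vec d) (m : ZLat d) : fderiv ℝ f (x + intVec m) = fderiv ℝ f x := by
  have h1 : HasFDerivAt (fun y : Vec d => y + intVec m)
      (ContinuousLinearMap.id ℝ (Vec d)) x := by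
    simpa using (hasFDerivAt_id x).add_const (intVec m)
  have h2 := (hf (x + intVec m)).hasFDerivAt.comp x h1
  have h3 : f ∘ (fun y : Vec d => y + intVec m) = f := funext fun y => hper y m
  rw [h3] at h2
  have h4 := h2.fderiv
  rw [ContinuousLinearMap.comp_id] at h4
  exact h4.symm

lemma lipschitz_of_bounded_fderiv {E : Type*} [NormedAddCommGroup E] [NormedSpace ℝ E]
    {f : Vec d → E} {M : ℝ} (hf : Differentiable ℝ f) (hM : ∀ x, ‖fderiv ℝ f x‖ ≤ M)
    (x y : Vec d) : ‖f y - f x‖ ≤ M * ‖y - x‖ :=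
  Convex.norm_image_sub_le_of_norm_fderiv_le (fun z _ => hf z)
    (fun z _ => hM z) convex_univ trivial trivial

lemma taylor_bound {E : Type*} [NormedAddCommGroup E] [NormedSpace ℝ E]
    {f : Vec d → E} {M : ℝ} (hf : Differentiable ℝ f) (hM0 : 0 ≤ M)
    (hM : ∀ y z : Vec d, ‖fderiv ℝ f y - fderiv ℝ f z‖ ≤ M * ‖y - z‖)
    (x h : Vec d) : ‖f (x + h) - f x - fderiv ℝ f x h‖ ≤ M * ‖h‖ ^ 2 := by
  set L := fderiv ℝ f x with hL
  set g : Vec d → E := fun y => f y - L y with hg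
  have hgd : Differentiable ℝ g := hf.sub L.differentiable
  have hgd' : ∀ y, fderiv ℝ g y = fderiv ℝ f y - L := by
    intro y
    rw [hg]
    rw [fderiv_fun_sub (hf y) L.differentiableAt, L.fderiv]
  have key : ‖g (x + h) - g x‖ ≤ M * ‖h‖ * ‖(x + h) - x‖ := by
    apply Convex.norm_image_sub_le_of_norm_fderiv_le (s := Metric.closedBall x ‖h‖)
      (fun z _ => hgd z) ?_ (convex_closedBall x ‖h‖)
      (Metric.mem_closedBall_self (norm_nonneg h))
      (by rw [Metric.mem_closedBall, dist_eq_norm, add_sub_cancel_left])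
    intro z hz
    rw [hgd']
    have h2 : ‖z - x‖ ≤ ‖h‖ := by
      rw [Metric.mem_closedBall, dist_eq_norm] at hz; exact hz
    calc ‖fderiv ℝ f z - L‖ ≤ M * ‖z - x‖ := hM z x
      _ ≤ M * ‖h‖ := by nlinarith
  have heq : g (x + h) - g x = f (x + h) - f x - L h := by
    simp only [hg, map_add]
    abel
  rw [heq] at key
  rw [add_sub_cancel_left] at key
  calc ‖f (x + h) - f x - L h‖ ≤ M * ‖h‖ * ‖h‖ := key
    _ = M * ‖h‖ ^ 2 := by ring

/-- The half-open cell of sidelength `1/N` with top corner `gridPt N z`. -/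
def cell (d N : ℕ) (z : ZLat d) : Set (Vec d) :=
  {x | ∀ i, x i ∈ Set.Ioc (-(1/2 : ℝ) + ((z i : ℝ) - 1) / N) (-(1/2 : ℝ) + (z i : ℝ) / N)}

lemma Ioc_iff_ceil {N : ℝ} (hN : 0 < N) (c : ℤ) (t : ℝ) :
    (-(1/2 : ℝ) + ((c : ℝ) - 1) / N < t ∧ t ≤ -(1/2 : ℝ) + (c : ℝ) / N) ↔
      ⌈N * (t + 1/2)⌉ = c := by
  rw [Int.ceil_eq_iff, mul_comm]
  constructor
  · rintro ⟨h1, h2⟩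
    exact ⟨(div_lt_iff₀ hN).mp (by linarith), (le_div_iff₀ hN).mp (by linarith)⟩
  · rintro ⟨h1, h2⟩
    have ha := (div_lt_iff₀ hN).mpr h1
    have hb := (le_div_iff₀ hN).mpr h2
    exact ⟨by linarith, by linarith⟩

lemma mem_cell_iff {N : ℕ} (hN : 0 < N) {z : ZLat d} {x : Vec d} :
    x ∈ cell d N z ↔ ∀ i, ⌈(N : ℝ) * (x i + 1/2)⌉ = z i := by
  have hN' : (0 : ℝ) < N := by exact_mod_cast hN
  unfold cell
  simp only [Set.mem_setOf_eq, Set.mem_Ioc]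
  exact forall_congr' fun i => Ioc_iff_ceil hN' (z i) (x i)

lemma mem_gridSet_iff {N : ℕ} {z : ZLat d} :
    z ∈ gridSet d N ↔ ∀ i, 1 ≤ z i ∧ z i ≤ (N : ℤ) := by
  unfold gridSet
  rw [Finset.mem_Icc]
  constructor
  · rintro ⟨h1, h2⟩ i; exact ⟨h1 i, h2 i⟩
  · intro h; exact ⟨fun i => (h i).1, fun i => (h i).2⟩

lemma cell_subset_cube {N : ℕ} (hN : 0 < N) {z : ZLat d} (hz : z ∈ gridSet d N) :
    cell d N z ⊆ cubeΩ d := by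
  have hN' : (0 : ℝ) < N := by exact_mod_cast hN
  intro x hx i
  obtain ⟨h1, h2⟩ := hx i
  obtain ⟨hz1, hz2⟩ := mem_gridSet_iff.mp hz i
  have hz1' : (1 : ℝ) ≤ (z i : ℝ) := by exact_mod_cast hz1
  have hz2' : (z i : ℝ) ≤ (N : ℝ) := by exact_mod_cast hz2
  constructor
  · have : (0 : ℝ) ≤ ((z i : ℝ) - 1) / N := div_nonneg (by linarith) (le_of_lt hN')
    linarith
  · have : (z i : ℝ) / N ≤ 1 := by
      rw [div_le_one hN']; exact hz2'
    linarith

lemma cube_eq_biUnion {N : ℕ} (hN : 0 < N) :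
    cubeΩ d = ⋃ z ∈ gridSet d N, cell d N z := by
  have hN' : (0 : ℝ) < N := by exact_mod_cast hN
  apply Set.Subset.antisymm
  · intro x hx
    set z : ZLat d := fun i => ⌈(N : ℝ) * (x i + 1/2)⌉ with hzdef
    have hzg : z ∈ gridSet d N := by
      rw [mem_gridSet_iff]
      intro i
      obtain ⟨ha, hb⟩ := hx i
      constructor
      · apply Int.ceil_pos.mpr
        have : (0 : ℝ) < x i + 1/2 := by linarith
        positivity
      · apply Int.ceil_le.mpr
        push_cast
        calc (N : ℝ) * (x i + 1/2) ≤ (N : ℝ) * 1 := by nlinarith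
          _ = (N : ℝ) := mul_one _
    exact Set.mem_biUnion hzg ((mem_cell_iff hN).mpr fun i => rfl)
  · intro x hx
    obtain ⟨z, hz, hxz⟩ := Set.mem_iUnion₂.mp hx
    exact cell_subset_cube hN hz hxz

lemma cell_pairwise_disjoint {N : ℕ} (hN : 0 < N) :
    (↑(gridSet d N) : Set (ZLat d)).Pairwise (Function.onFun Disjoint (cell d N)) := by
  intro z _ z' _ hzz'
  show Disjoint (cell d N z) (cell d N z')
  rw [Set.disjoint_left]
  intro x hx hx'
  apply hzz'
  funext i
  rw [← (mem_cell_iff hN).mp hx i, ← (mem_cell_iff hN).mp hx' i]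

lemma cell_eq_preimage {N : ℕ} (z : ZLat d) :
    cell d N z = (MeasurableEquiv.toLp 2 (Fin d → ℝ)).symm ⁻¹'
      (Set.univ.pi fun i => Set.Ioc (-(1/2 : ℝ) + ((z i : ℝ) - 1) / N)
        (-(1/2 : ℝ) + (z i : ℝ) / N)) := by
  ext x
  simp only [Set.mem_preimage, Set.mem_univ_pi]
  rfl

lemma measurableSet_cell {N : ℕ} (z : ZLat d) : MeasurableSet (cell d N z) := by
  rw [cell_eq_preimage]
  exact (MeasurableEquiv.toLp 2 (Fin d → ℝ)).symm.measurable
    (MeasurableSet.univ_pi fun i => measurableSet_Ioc)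

lemma volume_cell {N : ℕ} (hN : 0 < N) (z : ZLat d) :
    volume (cell d N z) = ENNReal.ofReal ((N : ℝ)⁻¹) ^ d := by
  have hN' : (0 : ℝ) < N := by exact_mod_cast hN
  rw [cell_eq_preimage]
  rw [(EuclideanSpace.volume_preserving_symm_measurableEquiv_toLp (Fin d)).measure_preimage
    ((MeasurableSet.univ_pi fun i => measurableSet_Ioc).nullMeasurableSet)]
  rw [volume_pi_pi]
  have : ∀ i : Fin d, volume (Set.Ioc (-(1/2 : ℝ) + ((z i : ℝ) - 1) / N)
      (-(1/2 : ℝ) + (z i : ℝ) / N)) = ENNReal.ofReal ((N : ℝ)⁻¹) := by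
    intro i
    rw [Real.volume_Ioc]
    congr 1
    rw [show (-(1/2 : ℝ) + (z i : ℝ) / (N : ℝ)) - (-(1/2 : ℝ) + ((z i : ℝ) - 1) / (N : ℝ))
      = ((z i : ℝ) - ((z i : ℝ) - 1)) / (N : ℝ) from by ring]
    rw [show ((z i : ℝ) - ((z i : ℝ) - 1)) = 1 from by ring, one_div]
  simp only [this, Finset.prod_const, Finset.card_univ, Fintype.card_fin]

lemma volume_cell_toReal {N : ℕ} (hN : 0 < N) (z : ZLat d) :
    (volume (cell d N z)).toReal = ((N : ℝ)⁻¹) ^ d := by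
  have hN' : (0 : ℝ) < N := by exact_mod_cast hN
  rw [volume_cell hN z, ENNReal.toReal_pow, ENNReal.toReal_ofReal (by positivity)]

lemma gridPt_mem_cell {N : ℕ} (hN : 0 < N) (z : ZLat d) : gridPt N z ∈ cell d N z := by
  have hN' : (0 : ℝ) < N := by exact_mod_cast hN
  intro i
  have hg : gridPt N z i = -(1/2 : ℝ) + (z i : ℝ) / N := rfl
  constructor
  · rw [hg]
    have : ((z i : ℝ) - 1) / N < (z i : ℝ) / N := by
      rw [div_lt_div_iff₀ hN' hN']
      nlinarith
    linarith
  · rw [hg]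

lemma dist_le_of_mem_cell {N : ℕ} (hN : 0 < N) {z : ZLat d} {x : Vec d}
    (hx : x ∈ cell d N z) : ‖x - gridPt N z‖ ≤ ((d : ℝ) + 1) / N := by
  have hN' : (0 : ℝ) < N := by exact_mod_cast hN
  have hcoord : ∀ i, |(x - gridPt N z) i| ≤ (N : ℝ)⁻¹ := by
    intro i
    obtain ⟨h1, h2⟩ := hx i
    have hg : (x - gridPt N z) i = x i - (-(1/2 : ℝ) + (z i : ℝ) / N) := by
      simp [gridPt]
    rw [hg, abs_le]
    constructor
    · have : ((z i : ℝ) - 1) / N = (z i : ℝ) / N - (N : ℝ)⁻¹ := by field_simp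
      rw [this] at h1
      linarith
    · linarith [inv_pos.mpr hN']
  calc ‖x - gridPt N z‖ ≤ Real.sqrt d * (N : ℝ)⁻¹ :=
        vec_norm_le_of_coord (by positivity) hcoord
    _ ≤ ((d : ℝ) + 1) * (N : ℝ)⁻¹ := by
        apply mul_le_mul_of_nonneg_right sqrt_d_le (by positivity)
    _ = ((d : ℝ) + 1) / N := by rw [div_eq_mul_inv]

lemma cube_subset_ball : cubeΩ d ⊆ Metric.closedBall (0 : Vec d) ((d : ℝ) + 1) := by
  intro x hx
  rw [Metric.mem_closedBall, dist_zero_right]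
  have hcoord : ∀ i, |x i| ≤ 1 := by
    intro i
    obtain ⟨h1, h2⟩ := hx i
    rw [abs_le]
    constructor <;> linarith
  calc ‖x‖ ≤ Real.sqrt d * 1 := vec_norm_le_of_coord zero_le_one hcoord
    _ ≤ (d : ℝ) + 1 := by rw [mul_one]; exact sqrt_d_le

lemma card_gridSet {N : ℕ} : (gridSet d N).card = N ^ d := by
  unfold gridSet
  rw [Pi.card_Icc]
  simp [Int.card_Icc]

lemma riemann_sum_tendsto {G : Vec d → ℝ} (hG : Continuous G) :
    Filter.Tendsto (fun N : ℕ => ((N : ℝ)⁻¹) ^ d * ∑ z ∈ gridSet d N, G (gridPt N z))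
      Filter.atTop (nhds (∫ x in cubeΩ d, G x)) := by
  rw [Metric.tendsto_atTop]
  intro δ hδ
  set K := Metric.closedBall (0 : Vec d) ((d : ℝ) + 1) with hK
  have hKc : IsCompact K := isCompact_closedBall _ _
  have hGK : IntegrableOn G K := hG.continuousOn.integrableOn_compact hKc
  have hUC := hKc.uniformContinuousOn_of_continuous hG.continuousOn
  rw [Metric.uniformContinuousOn_iff_le] at hUC
  obtain ⟨η, hη, hUC⟩ := hUC (δ/2) (by linarith)
  obtain ⟨N₀, hN₀⟩ := exists_nat_gt (((d : ℝ) + 1) / η)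
  refine ⟨max N₀ 1, fun N hN => ?_⟩
  have hN1 : 1 ≤ N := le_trans (le_max_right _ _) hN
  have hNN₀ : N₀ ≤ N := le_trans (le_max_left _ _) hN
  have hNpos : 0 < N := hN1
  have hN' : (0 : ℝ) < N := by exact_mod_cast hNpos
  have hmesh : ((d : ℝ) + 1) / N ≤ η := by
    rw [div_le_iff₀ hN']
    have h1 : ((d : ℝ) + 1) / η < N := lt_of_lt_of_le hN₀ (by exact_mod_cast hNN₀)
    rw [div_lt_iff₀ hη] at h1
    nlinarith
  have hint : ∀ z ∈ gridSet d N, IntegrableOn G (cell d N z) := fun z hz =>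
    hGK.mono_set ((cell_subset_cube hNpos hz).trans cube_subset_ball)
  have hsplit : ∫ x in cubeΩ d, G x = ∑ z ∈ gridSet d N, ∫ x in cell d N z, G x := by
    rw [cube_eq_biUnion hNpos (d := d)]
    exact integral_biUnion_finset _ (fun z _ => measurableSet_cell z)
      (cell_pairwise_disjoint hNpos) hint
  have hterm : ∀ z ∈ gridSet d N,
      |((N : ℝ)⁻¹) ^ d * G (gridPt N z) - ∫ x in cell d N z, G x|
        ≤ δ/2 * ((N : ℝ)⁻¹) ^ d := by
    intro z hz
    have hvolR := volume_cell_toReal hNpos z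
    have hvfin : volume (cell d N z) < ⊤ := by
      rw [volume_cell hNpos z]
      exact ENNReal.pow_lt_top ENNReal.ofReal_lt_top
    have hgK : gridPt N z ∈ K :=
      cube_subset_ball (cell_subset_cube hNpos hz (gridPt_mem_cell hNpos z))
    have hconst : ((N : ℝ)⁻¹) ^ d * G (gridPt N z)
        = ∫ _x in cell d N z, G (gridPt N z) := by
      rw [setIntegral_const, measureReal_def, hvolR, smul_eq_mul]
    rw [hconst, ← integral_sub (integrableOn_const (C := G (gridPt N z)) hvfin.ne) (hint z hz)]
    have hb := norm_setIntegral_le_of_norm_le_const (μ := volume) (s := cell d N z)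
      (C := δ/2) (f := fun x => G (gridPt N z) - G x) hvfin ?_
    · rw [Real.norm_eq_abs] at hb
      rw [measureReal_def, hvolR] at hb
      exact hb
    · intro x hx
      rw [Real.norm_eq_abs, ← Real.dist_eq]
      have hxK : x ∈ K := cube_subset_ball (cell_subset_cube hNpos hz hx)
      apply hUC (gridPt N z) hgK x hxK
      rw [dist_eq_norm, norm_sub_rev]
      exact le_trans (dist_le_of_mem_cell hNpos hx) hmesh
  rw [Real.dist_eq, Finset.mul_sum, hsplit, ← Finset.sum_sub_distrib]
  have hpow1 : (N : ℝ) ^ d * ((N : ℝ)⁻¹) ^ d = 1 := by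
    rw [← mul_pow, mul_inv_cancel₀ (ne_of_gt hN'), one_pow]
  calc |∑ z ∈ gridSet d N, (((N : ℝ)⁻¹) ^ d * G (gridPt N z) - ∫ x in cell d N z, G x)|
      ≤ ∑ z ∈ gridSet d N, |((N : ℝ)⁻¹) ^ d * G (gridPt N z) - ∫ x in cell d N z, G x| :=
        Finset.abs_sum_le_sum_abs _ _
    _ ≤ (gridSet d N).card • (δ/2 * ((N : ℝ)⁻¹) ^ d) := Finset.sum_le_card_nsmul _ _ _ hterm
    _ = (N : ℝ) ^ d * (δ/2 * ((N : ℝ)⁻¹) ^ d) := by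
        rw [card_gridSet, nsmul_eq_mul]
        push_cast
        ring
    _ = δ/2 * ((N : ℝ) ^ d * ((N : ℝ)⁻¹) ^ d) := by ring
    _ = δ/2 := by rw [hpow1, mul_one]
    _ < δ := by linarith

lemma quad_apply_bound {X : Type*} [NormedAddCommGroup X] [NormedSpace ℝ X]
    (m : ContinuousMultilinearMap ℝ (fun _ : Fin 2 => X) ℝ) (v w : X) :
    |m ![v, w]| ≤ ‖m‖ * (‖v‖ * ‖w‖) := by
  have h := m.le_opNorm ![v, w]
  rw [Real.norm_eq_abs] at h
  have hp : ∏ i, ‖(![v, w] : Fin 2 → X) i‖ = ‖v‖ * ‖w‖ := by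
    rw [Fin.prod_univ_two]
    simp
  rw [hp] at h
  exact h

lemma quad_continuous {X : Type*} [NormedAddCommGroup X] [NormedSpace ℝ X]
    (m : ContinuousMultilinearMap ℝ (fun _ : Fin 2 => X) ℝ) :
    Continuous fun g : X => m ![g, g] := by
  have h : Continuous fun g : X => (![g, g] : Fin 2 → X) := by
    apply continuous_pi
    intro i
    fin_cases i
    · simpa using continuous_id'
    · simpa using continuous_id'
  exact m.cont.comp h

lemma defect_finset {S n : ℕ} (A : MLSetting d S n) :
    ∃ D : Finset (ZLat d), ∀ z : ZLat d, A.Vsite z ≠ A.Vhom → z ∈ D := by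
  set G := A.F⁻¹ with hGdef
  have hFunit : IsUnit A.F.det := by rw [A.hdetF]; exact isUnit_one
  set K : Fin d → ℤ := fun j => ⌈(∑ i, |G j i|) * A.Rdef⌉ with hKdef
  refine ⟨Finset.Icc (fun j => -(K j)) K, fun z hz => ?_⟩
  have hlt : ‖latpos A.F z‖ < A.Rdef := by
    by_contra h
    exact hz (A.hVsite_hom z (le_of_not_gt h))
  have hzr : ∀ j, (z j : ℝ) = ∑ i, G j i * latpos A.F z i := by
    intro j
    have h1 : latpos A.F z = A.F.mulVec (fun j => (z j : ℝ)) := by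
      funext i
      simp [latpos, Matrix.mulVec, dotProduct]
    have h2 : G.mulVec (A.F.mulVec (fun j => (z j : ℝ))) = (fun j => (z j : ℝ)) := by
      rw [Matrix.mulVec_mulVec, hGdef, Matrix.nonsing_inv_mul A.F hFunit, Matrix.one_mulVec]
    calc (z j : ℝ) = G.mulVec (A.F.mulVec (fun j => (z j : ℝ))) j := by rw [h2]
      _ = ∑ i, G j i * latpos A.F z i := by
          rw [← h1]
          simp [Matrix.mulVec, dotProduct]
  have habs : ∀ j, |(z j : ℝ)| ≤ (∑ i, |G j i|) * A.Rdef := by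
    intro j
    rw [hzr j]
    calc |∑ i, G j i * latpos A.F z i| ≤ ∑ i, |G j i * latpos A.F z i| :=
        Finset.abs_sum_le_sum_abs _ _
      _ ≤ ∑ i, |G j i| * A.Rdef := by
          apply Finset.sum_le_sum
          intro i _
          rw [abs_mul]
          exact mul_le_mul_of_nonneg_left
            (le_of_lt (lt_of_le_of_lt (abs_coord_le_norm _ i) hlt)) (abs_nonneg _)
      _ = (∑ i, |G j i|) * A.Rdef := by rw [Finset.sum_mul]
  have habs' : ∀ j, |z j| ≤ K j := by
    intro j
    have h2 : |(z j : ℝ)| ≤ (K j : ℝ) := le_trans (habs j) (Int.le_ceil _)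
    rw [← Int.cast_abs] at h2
    exact_mod_cast h2
  rw [Finset.mem_Icc]
  constructor
  · intro j
    have := abs_le.mp (habs' j)
    simpa using this.1
  · intro j
    exact (abs_le.mp (habs' j)).2

end CBH

set_option maxHeartbeats 2000000

/-- Lemma: convergence of Hessians.
For periodic fields `Z ∈ C³(Ω, ℝ^n)`, `q_α ∈ C²(Ω, ℝ^n)` and the atomistic
fields `z^ε_α = Z + ε q_α`, `ε = 1/N`, one has
`⟨δ²E^a_ε(0) z^ε, z^ε⟩ − ⟨δ²E^c_Ω(0)(Z,q), (Z,q)⟩ → 0` as `ε → 0`. -/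
theorem cauchy_born_hessian_convergence {d S n : ℕ} (A : MLSetting d S n)
    (Z : Vec d → Vec n) (q : Fin S → Vec d → Vec n)
    (hZ : ContDiff ℝ 3 Z) (hq : ∀ α, ContDiff ℝ 2 (q α))
    (hZper : ZPeriodic Z) (hqper : ∀ α, ZPeriodic (q α)) :
    Filter.Tendsto (fun N : ℕ => A.d2Eaeps (N + 1) Z q - A.d2EcΩ Z q)
      Filter.atTop (nhds 0) := by
  classical
  have hd1 : 1 ≤ d := by rcases A.hd with h | h <;> omega
  -- derivative bounds for `Z`
  have hZdiff : Differentiable ℝ Z := hZ.differentiable (by norm_num)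
  have hZ1 : ContDiff ℝ 1 (fderiv ℝ Z) := hZ.fderiv_right (by norm_num)
  have hZ1diff : Differentiable ℝ (fderiv ℝ Z) := hZ1.differentiable one_ne_zero
  have hfZper : ∀ (x : Vec d) (m : ZLat d), fderiv ℝ Z (x + intVec m) = fderiv ℝ Z x :=
    CBH.fderiv_periodic hZdiff hZper
  obtain ⟨M1, hM1nn, hM1⟩ := CBH.bounded_of_periodic hZ1.continuous hfZper
  obtain ⟨M2, hM2nn, hM2⟩ := CBH.bounded_of_periodic (hZ1.continuous_fderiv one_ne_zero)
    (CBH.fderiv_periodic hZ1diff hfZper)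
  have hZlip : ∀ y x : Vec d, ‖fderiv ℝ Z y - fderiv ℝ Z x‖ ≤ M2 * ‖y - x‖ := fun y x =>
    CBH.lipschitz_of_bounded_fderiv hZ1diff hM2 x y
  have hZtaylor : ∀ x h : Vec d, ‖Z (x + h) - Z x - fderiv ℝ Z x h‖ ≤ M2 * ‖h‖ ^ 2 :=
    CBH.taylor_bound hZdiff hM2nn hZlip
  -- bounds for `q`
  have hqdiff : ∀ α, Differentiable ℝ (q α) := fun α => (hq α).differentiable (by norm_num)
  choose Cq0 hCq0nn hCq0 using fun α => CBH.bounded_of_periodic (hq α).continuous (hqper α)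
  choose Cq1 hCq1nn hCq1 using fun α =>
    CBH.bounded_of_periodic ((hq α).fderiv_right (by norm_num) :
        ContDiff ℝ 1 (fderiv ℝ (q α))).continuous
      (CBH.fderiv_periodic (hqdiff α) (hqper α))
  set Mq0 : ℝ := ∑ α, Cq0 α with hMq0def
  have hMq0nn : 0 ≤ Mq0 := Finset.sum_nonneg fun α _ => hCq0nn α
  have hMq0 : ∀ α x, ‖q α x‖ ≤ Mq0 := fun α x => le_trans (hCq0 α x)
    (Finset.single_le_sum (fun β _ => hCq0nn β) (Finset.mem_univ α))
  set Mq1 : ℝ := ∑ α, Cq1 α with hMq1def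
  have hMq1nn : 0 ≤ Mq1 := Finset.sum_nonneg fun α _ => hCq1nn α
  have hqlip : ∀ α (x y : Vec d), ‖q α y - q α x‖ ≤ Mq1 * ‖y - x‖ := by
    intro α x y
    refine le_trans (CBH.lipschitz_of_bounded_fderiv (hqdiff α) (hCq1 α) x y) ?_
    exact mul_le_mul_of_nonneg_right
      (Finset.single_le_sum (fun β _ => hCq1nn β) (Finset.mem_univ α)) (norm_nonneg _)
  -- geometric bound on interaction directions
  set Rm : ℝ := ∑ e : ↥A.R, ‖latpos A.F e.1.1‖ with hRmdef
  have hRmnn : 0 ≤ Rm := Finset.sum_nonneg fun e _ => norm_nonneg _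
  have hRm : ∀ e : ↥A.R, ‖latpos A.F e.1.1‖ ≤ Rm := fun e =>
    Finset.single_le_sum (f := fun e : ↥A.R => ‖latpos A.F e.1.1‖)
      (fun f _ => norm_nonneg _) (Finset.mem_univ e)
  set B : ℝ := M1 * Rm + 2 * Mq0 with hBdef
  have hBnn : 0 ≤ B := by
    have := mul_nonneg hM1nn hRmnn
    rw [hBdef]; linarith
  have hcb_bound : ∀ x, ‖A.cbStrain Z q x‖ ≤ B := by
    intro x
    rw [pi_norm_le_iff_of_nonneg hBnn]
    intro e
    have h1 : ‖fderiv ℝ Z x (latpos A.F e.1.1)‖ ≤ M1 * Rm :=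
      le_trans ((fderiv ℝ Z x).le_opNorm _)
        (mul_le_mul (hM1 x) (hRm e) (norm_nonneg _) hM1nn)
    calc ‖A.cbStrain Z q x e‖
        = ‖fderiv ℝ Z x (latpos A.F e.1.1) + q e.1.2.2 x - q e.1.2.1 x‖ := rfl
      _ ≤ ‖fderiv ℝ Z x (latpos A.F e.1.1) + q e.1.2.2 x‖ + ‖q e.1.2.1 x‖ := norm_sub_le _ _
      _ ≤ ‖fderiv ℝ Z x (latpos A.F e.1.1)‖ + ‖q e.1.2.2 x‖ + ‖q e.1.2.1 x‖ := by
          linarith [norm_add_le (fderiv ℝ Z x (latpos A.F e.1.1)) (q e.1.2.2 x)]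
      _ ≤ M1 * Rm + Mq0 + Mq0 := by
          linarith [hMq0 e.1.2.2 x, hMq0 e.1.2.1 x]
      _ = B := by rw [hBdef]; ring
  set C0 : ℝ := M2 * Rm ^ 2 + Mq1 * Rm with hC0def
  have hC0nn : 0 ≤ C0 := by
    have h1 := mul_nonneg hM2nn (sq_nonneg Rm)
    have h2 := mul_nonneg hMq1nn hRmnn
    rw [hC0def]; linarith
  -- the key consistency estimate `‖Dᵉ z - cbStrain‖ ≤ C0/N`
  have hkey : ∀ N : ℕ, 0 < N → ∀ x : Vec d,
      ‖A.Deps N Z q x - A.cbStrain Z q x‖ ≤ C0 / N := by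
    intro N hN x
    have hN' : (0 : ℝ) < N := by exact_mod_cast hN
    have hNne : (N : ℝ) ≠ 0 := ne_of_gt hN'
    rw [pi_norm_le_iff_of_nonneg (by positivity)]
    intro e
    have hL : (N : ℝ) • fderiv ℝ Z x ((N : ℝ)⁻¹ • latpos A.F e.1.1)
        = fderiv ℝ Z x (latpos A.F e.1.1) := by
      rw [(fderiv ℝ Z x).map_smul, smul_smul, mul_inv_cancel₀ hNne, one_smul]
    have hDeps : A.Deps N Z q x e
        = (N : ℝ) • (Z (x + (N : ℝ)⁻¹ • latpos A.F e.1.1) - Z x)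
          + (q e.1.2.2 (x + (N : ℝ)⁻¹ • latpos A.F e.1.1) - q e.1.2.1 x) := by
      show (N : ℝ) • ((Z (x + (N : ℝ)⁻¹ • latpos A.F e.1.1)
            + (N : ℝ)⁻¹ • q e.1.2.2 (x + (N : ℝ)⁻¹ • latpos A.F e.1.1))
          - (Z x + (N : ℝ)⁻¹ • q e.1.2.1 x)) = _
      rw [smul_sub, smul_add, smul_add, smul_smul, smul_smul, mul_inv_cancel₀ hNne,
        one_smul, one_smul, smul_sub]
      abel
    have hsplit : (A.Deps N Z q x - A.cbStrain Z q x) e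
        = (N : ℝ) • (Z (x + (N : ℝ)⁻¹ • latpos A.F e.1.1) - Z x
              - fderiv ℝ Z x ((N : ℝ)⁻¹ • latpos A.F e.1.1))
          + (q e.1.2.2 (x + (N : ℝ)⁻¹ • latpos A.F e.1.1) - q e.1.2.2 x) := by
      have hcb : A.cbStrain Z q x e
          = fderiv ℝ Z x (latpos A.F e.1.1) + q e.1.2.2 x - q e.1.2.1 x := rfl
      rw [Pi.sub_apply, hDeps, hcb,
        smul_sub (N : ℝ) (Z (x + (N : ℝ)⁻¹ • latpos A.F e.1.1) - Z x)
          (fderiv ℝ Z x ((N : ℝ)⁻¹ • latpos A.F e.1.1)), hL]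
      abel
    rw [hsplit]
    have hεr : ‖(N : ℝ)⁻¹ • latpos A.F e.1.1‖ = ‖latpos A.F e.1.1‖ / N := by
      rw [norm_smul, Real.norm_eq_abs, abs_inv, abs_of_pos hN', inv_mul_eq_div]
    have ht0 : (0 : ℝ) ≤ ‖(N : ℝ)⁻¹ • latpos A.F e.1.1‖ := norm_nonneg _
    have htle : ‖(N : ℝ)⁻¹ • latpos A.F e.1.1‖ ≤ Rm / N := by
      rw [hεr]
      exact (div_le_div_iff_of_pos_right hN').mpr (hRm e)
    have h1 : ‖(N : ℝ) • (Z (x + (N : ℝ)⁻¹ • latpos A.F e.1.1) - Z x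
          - fderiv ℝ Z x ((N : ℝ)⁻¹ • latpos A.F e.1.1))‖ ≤ M2 * Rm ^ 2 / N := by
      rw [norm_smul, Real.norm_eq_abs, abs_of_pos hN']
      have h2 := hZtaylor x ((N : ℝ)⁻¹ • latpos A.F e.1.1)
      have h3 : ‖(N : ℝ)⁻¹ • latpos A.F e.1.1‖ ^ 2 ≤ (Rm / N) ^ 2 := by nlinarith
      have h4 : (N : ℝ) * (M2 * (Rm / N) ^ 2) = M2 * Rm ^ 2 / N := by
        field_simp
      have k1 := mul_le_mul_of_nonneg_left h2 (le_of_lt hN')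
      have k2 : M2 * ‖(N : ℝ)⁻¹ • latpos A.F e.1.1‖ ^ 2 ≤ M2 * (Rm / N) ^ 2 :=
        mul_le_mul_of_nonneg_left h3 hM2nn
      have k3 := mul_le_mul_of_nonneg_left k2 (le_of_lt hN')
      linarith
    have h2 : ‖q e.1.2.2 (x + (N : ℝ)⁻¹ • latpos A.F e.1.1) - q e.1.2.2 x‖
        ≤ Mq1 * Rm / N := by
      have h3 := hqlip e.1.2.2 x (x + (N : ℝ)⁻¹ • latpos A.F e.1.1)
      rw [add_sub_cancel_left] at h3
      calc ‖q e.1.2.2 (x + (N : ℝ)⁻¹ • latpos A.F e.1.1) - q e.1.2.2 x‖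
          ≤ Mq1 * ‖(N : ℝ)⁻¹ • latpos A.F e.1.1‖ := h3
        _ ≤ Mq1 * (Rm / N) := mul_le_mul_of_nonneg_left htle hMq1nn
        _ = Mq1 * Rm / N := by ring
    calc ‖(N : ℝ) • (Z (x + (N : ℝ)⁻¹ • latpos A.F e.1.1) - Z x
            - fderiv ℝ Z x ((N : ℝ)⁻¹ • latpos A.F e.1.1))
          + (q e.1.2.2 (x + (N : ℝ)⁻¹ • latpos A.F e.1.1) - q e.1.2.2 x)‖
        ≤ M2 * Rm ^ 2 / N + Mq1 * Rm / N := le_trans (norm_add_le _ _) (add_le_add h1 h2)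
      _ = C0 / N := by rw [hC0def]; ring
  -- uniform bound on the discrete strains
  have hDbound : ∀ N : ℕ, 0 < N → ∀ x : Vec d, ‖A.Deps N Z q x‖ ≤ B + C0 := by
    intro N hN x
    have h1 := hkey N hN x
    have hN1 : (1 : ℝ) ≤ N := by exact_mod_cast hN
    have h2 : C0 / N ≤ C0 := div_le_self hC0nn hN1
    calc ‖A.Deps N Z q x‖
        = ‖(A.Deps N Z q x - A.cbStrain Z q x) + A.cbStrain Z q x‖ := by rw [sub_add_cancel]
      _ ≤ ‖A.Deps N Z q x - A.cbStrain Z q x‖ + ‖A.cbStrain Z q x‖ := norm_add_le _ _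
      _ ≤ C0 / N + B := add_le_add h1 (hcb_bound x)
      _ ≤ B + C0 := by linarith
  -- quadratic forms
  obtain ⟨Cs, hCs⟩ := A.hV_bdd
  obtain ⟨Ch, hCh⟩ := A.hVhom_bdd
  have hCsnn : 0 ≤ Cs := le_trans (norm_nonneg _) (hCs 0 A.yvec 2 (by norm_num))
  have hChnn : 0 ≤ Ch := le_trans (norm_nonneg _) (hCh A.yvec 2 (by norm_num))
  set Ψ : (↥A.R → Vec n) → ℝ :=
    fun g => iteratedFDeriv ℝ 2 A.Vhom A.yvec ![g, g] with hΨdef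
  have hΨcont : Continuous Ψ := CBH.quad_continuous _
  set G : Vec d → ℝ := fun x => Ψ (A.cbStrain Z q x) with hGdef
  have hcbcont : Continuous (A.cbStrain Z q) := by
    apply continuous_pi
    intro e
    show Continuous fun x => fderiv ℝ Z x (latpos A.F e.1.1) + q e.1.2.2 x - q e.1.2.1 x
    exact ((hZ1.continuous.clm_apply continuous_const).add (hq e.1.2.2).continuous).sub
      (hq e.1.2.1).continuous
  have hGcont : Continuous G := hΨcont.comp hcbcont
  have hEc : A.d2EcΩ Z q = ∫ x in cubeΩ d, G x := rfl
  set Shom : ℕ → ℝ :=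
    fun N => ((N : ℝ)⁻¹) ^ d * ∑ z ∈ gridSet d N, Ψ (A.Deps N Z q (gridPt N z)) with hShomdef
  set SG : ℕ → ℝ :=
    fun N => ((N : ℝ)⁻¹) ^ d * ∑ z ∈ gridSet d N, G (gridPt N z) with hSGdef
  -- piece 3 : Riemann sums converge to the integral
  have h3 : Filter.Tendsto (fun N : ℕ => SG (N + 1) - A.d2EcΩ Z q)
      Filter.atTop (nhds 0) := by
    have h : Filter.Tendsto (fun N : ℕ => SG (N + 1)) Filter.atTop
        (nhds (∫ x in cubeΩ d, G x)) :=
      (CBH.riemann_sum_tendsto hGcont).comp (Filter.tendsto_add_atTop_nat 1)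
    have h'' := h.sub (tendsto_const_nhds (x := A.d2EcΩ Z q))
    rw [hEc] at h''
    simpa [hEc] using h''
  -- piece 1 : the defect contribution vanishes
  obtain ⟨D, hD⟩ := CBH.defect_finset A
  set M : ℝ := (Cs + Ch) * (B + C0) ^ 2 with hMdef
  have hMnn : 0 ≤ M := mul_nonneg (by linarith) (by positivity)
  have h1bound : ∀ N : ℕ, 0 < N →
      |A.d2Eaeps N Z q - Shom N| ≤ ((N : ℝ)⁻¹) * ((D.card : ℝ) * M) := by
    intro N hN
    have hN' : (0 : ℝ) < N := by exact_mod_cast hN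
    have hN1 : (1 : ℝ) ≤ N := by exact_mod_cast hN
    have hexp : A.d2Eaeps N Z q - Shom N = ((N : ℝ)⁻¹) ^ d *
        ∑ z ∈ gridSet d N,
          (iteratedFDeriv ℝ 2 (A.Vsite z) A.yvec
              ![A.Deps N Z q (gridPt N z), A.Deps N Z q (gridPt N z)]
            - Ψ (A.Deps N Z q (gridPt N z))) := by
      rw [hShomdef]
      simp only [MLSetting.d2Eaeps]
      rw [Finset.sum_sub_distrib, mul_sub]
    have hpoint0 : ∀ z, z ∉ D →
        iteratedFDeriv ℝ 2 (A.Vsite z) A.yvec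
            ![A.Deps N Z q (gridPt N z), A.Deps N Z q (gridPt N z)]
          - Ψ (A.Deps N Z q (gridPt N z)) = 0 := by
      intro z hzD
      have hv : A.Vsite z = A.Vhom := by
        by_contra h
        exact hzD (hD z h)
      simp only [hΨdef, hv, sub_self]
    have hpoint : ∀ z : ZLat d,
        |iteratedFDeriv ℝ 2 (A.Vsite z) A.yvec
            ![A.Deps N Z q (gridPt N z), A.Deps N Z q (gridPt N z)]
          - Ψ (A.Deps N Z q (gridPt N z))| ≤ M := by
      intro z
      have hg := hDbound N hN (gridPt N z)
      have hgnn : (0 : ℝ) ≤ ‖A.Deps N Z q (gridPt N z)‖ := norm_nonneg _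
      have ha := CBH.quad_apply_bound (iteratedFDeriv ℝ 2 (A.Vsite z) A.yvec)
        (A.Deps N Z q (gridPt N z)) (A.Deps N Z q (gridPt N z))
      have hb := CBH.quad_apply_bound (iteratedFDeriv ℝ 2 A.Vhom A.yvec)
        (A.Deps N Z q (gridPt N z)) (A.Deps N Z q (gridPt N z))
      have hna := hCs z A.yvec 2 (by norm_num)
      have hnb := hCh A.yvec 2 (by norm_num)
      have hgg : ‖A.Deps N Z q (gridPt N z)‖ * ‖A.Deps N Z q (gridPt N z)‖
          ≤ (B + C0) * (B + C0) := mul_le_mul hg hg hgnn (by linarith)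
      have hBC2 : (0 : ℝ) ≤ (B + C0) * (B + C0) := by positivity
      have ha' : |iteratedFDeriv ℝ 2 (A.Vsite z) A.yvec
          ![A.Deps N Z q (gridPt N z), A.Deps N Z q (gridPt N z)]| ≤ Cs * (B + C0) ^ 2 := by
        have h5 : ‖iteratedFDeriv ℝ 2 (A.Vsite z) A.yvec‖
            * (‖A.Deps N Z q (gridPt N z)‖ * ‖A.Deps N Z q (gridPt N z)‖)
            ≤ Cs * ((B + C0) * (B + C0)) :=
          mul_le_mul hna hgg (by positivity) hCsnn
        have h6 : Cs * ((B + C0) * (B + C0)) = Cs * (B + C0) ^ 2 := by ring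
        linarith
      have hb' : |Ψ (A.Deps N Z q (gridPt N z))| ≤ Ch * (B + C0) ^ 2 := by
        simp only [hΨdef]
        have h5 : ‖iteratedFDeriv ℝ 2 A.Vhom A.yvec‖
            * (‖A.Deps N Z q (gridPt N z)‖ * ‖A.Deps N Z q (gridPt N z)‖)
            ≤ Ch * ((B + C0) * (B + C0)) :=
          mul_le_mul hnb hgg (by positivity) hChnn
        have h6 : Ch * ((B + C0) * (B + C0)) = Ch * (B + C0) ^ 2 := by ring
        linarith
      calc |iteratedFDeriv ℝ 2 (A.Vsite z) A.yvec
            ![A.Deps N Z q (gridPt N z), A.Deps N Z q (gridPt N z)]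
          - Ψ (A.Deps N Z q (gridPt N z))|
          ≤ |iteratedFDeriv ℝ 2 (A.Vsite z) A.yvec
              ![A.Deps N Z q (gridPt N z), A.Deps N Z q (gridPt N z)]|
            + |Ψ (A.Deps N Z q (gridPt N z))| := abs_sub _ _
        _ ≤ Cs * (B + C0) ^ 2 + Ch * (B + C0) ^ 2 := add_le_add ha' hb'
        _ = M := by rw [hMdef]; ring
    have hsum : |∑ z ∈ gridSet d N,
        (iteratedFDeriv ℝ 2 (A.Vsite z) A.yvec
            ![A.Deps N Z q (gridPt N z), A.Deps N Z q (gridPt N z)]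
          - Ψ (A.Deps N Z q (gridPt N z)))| ≤ (D.card : ℝ) * M := by
      have hfilter : ((gridSet d N).filter (fun z => z ∈ D)).card ≤ D.card :=
        Finset.card_le_card fun z hz => (Finset.mem_filter.mp hz).2
      calc |∑ z ∈ gridSet d N,
          (iteratedFDeriv ℝ 2 (A.Vsite z) A.yvec
              ![A.Deps N Z q (gridPt N z), A.Deps N Z q (gridPt N z)]
            - Ψ (A.Deps N Z q (gridPt N z)))|
          ≤ ∑ z ∈ gridSet d N,
            |iteratedFDeriv ℝ 2 (A.Vsite z) A.yvec
                ![A.Deps N Z q (gridPt N z), A.Deps N Z q (gridPt N z)]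
              - Ψ (A.Deps N Z q (gridPt N z))| := Finset.abs_sum_le_sum_abs _ _
        _ = ∑ z ∈ (gridSet d N).filter (fun z => z ∈ D),
            |iteratedFDeriv ℝ 2 (A.Vsite z) A.yvec
                ![A.Deps N Z q (gridPt N z), A.Deps N Z q (gridPt N z)]
              - Ψ (A.Deps N Z q (gridPt N z))| := by
            symm
            apply Finset.sum_subset (Finset.filter_subset _ _)
            intro z hzg hzf
            have hzD : z ∉ D := fun h => hzf (Finset.mem_filter.mpr ⟨hzg, h⟩)
            rw [hpoint0 z hzD, abs_zero]
        _ ≤ ((gridSet d N).filter (fun z => z ∈ D)).card • M :=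
            Finset.sum_le_card_nsmul _ _ _ fun z _ => hpoint z
        _ ≤ (D.card : ℝ) * M := by
            rw [nsmul_eq_mul]
            exact mul_le_mul_of_nonneg_right (by exact_mod_cast hfilter) hMnn
    have hpow : ((N : ℝ)⁻¹) ^ d ≤ (N : ℝ)⁻¹ := by
      have := pow_le_pow_of_le_one (by positivity) (inv_le_one_of_one_le₀ hN1) hd1
      rwa [pow_one] at this
    rw [hexp, abs_mul, abs_of_nonneg (by positivity : (0:ℝ) ≤ ((N : ℝ)⁻¹) ^ d)]
    calc ((N : ℝ)⁻¹) ^ d * |∑ z ∈ gridSet d N,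
        (iteratedFDeriv ℝ 2 (A.Vsite z) A.yvec
            ![A.Deps N Z q (gridPt N z), A.Deps N Z q (gridPt N z)]
          - Ψ (A.Deps N Z q (gridPt N z)))|
        ≤ ((N : ℝ)⁻¹) ^ d * ((D.card : ℝ) * M) :=
          mul_le_mul_of_nonneg_left hsum (by positivity)
      _ ≤ ((N : ℝ)⁻¹) * ((D.card : ℝ) * M) :=
          mul_le_mul_of_nonneg_right hpow (by positivity)
  have h1 : Filter.Tendsto (fun N : ℕ => A.d2Eaeps (N + 1) Z q - Shom (N + 1))
      Filter.atTop (nhds 0) := by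
    have hlim : Filter.Tendsto (fun N : ℕ => (1 / ((N : ℝ) + 1)) * ((D.card : ℝ) * M))
        Filter.atTop (nhds 0) := by
      simpa using tendsto_one_div_add_atTop_nhds_zero_nat.mul_const ((D.card : ℝ) * M)
    apply squeeze_zero_norm _ hlim
    intro N
    rw [Real.norm_eq_abs]
    have hbd := h1bound (N + 1) (Nat.succ_pos N)
    have hc : (((N + 1 : ℕ) : ℝ))⁻¹ = 1 / ((N : ℝ) + 1) := by push_cast; rw [one_div]
    rwa [hc] at hbd
  -- piece 2 : replacing discrete strains by continuum strains
  have h2 : Filter.Tendsto (fun N : ℕ => Shom (N + 1) - SG (N + 1))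
      Filter.atTop (nhds 0) := by
    rw [Metric.tendsto_atTop]
    intro δ hδ
    have hKc : IsCompact (Metric.closedBall (0 : ↥A.R → Vec n) (B + C0)) :=
      isCompact_closedBall _ _
    have hUC := hKc.uniformContinuousOn_of_continuous hΨcont.continuousOn
    rw [Metric.uniformContinuousOn_iff_le] at hUC
    obtain ⟨η, hη, hUC⟩ := hUC (δ / 2) (by linarith)
    obtain ⟨N₀, hN₀⟩ := exists_nat_gt (C0 / η)
    refine ⟨N₀, fun N hN => ?_⟩
    have hN'pos : 0 < N + 1 := Nat.succ_pos N
    have hN'' : (0 : ℝ) < ((N + 1 : ℕ) : ℝ) := by exact_mod_cast hN'pos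
    have hmesh : C0 / ((N + 1 : ℕ) : ℝ) ≤ η := by
      have h1 : C0 / η < ((N + 1 : ℕ) : ℝ) := by
        refine lt_of_lt_of_le hN₀ ?_
        exact_mod_cast Nat.le_succ_of_le hN
      rw [div_lt_iff₀ hη] at h1
      rw [div_le_iff₀ hN'']
      nlinarith
    have hterm : ∀ z ∈ gridSet d (N + 1),
        |Ψ (A.Deps (N + 1) Z q (gridPt (N + 1) z)) - G (gridPt (N + 1) z)| ≤ δ / 2 := by
      intro z _
      rw [← Real.dist_eq]
      apply hUC
      · rw [Metric.mem_closedBall, dist_zero_right]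
        exact hDbound (N + 1) hN'pos _
      · rw [Metric.mem_closedBall, dist_zero_right]
        exact le_trans (hcb_bound _) (by linarith)
      · rw [dist_eq_norm]
        exact le_trans (hkey (N + 1) hN'pos _) hmesh
    have hexp2 : Shom (N + 1) - SG (N + 1) = (((N + 1 : ℕ) : ℝ)⁻¹) ^ d *
        ∑ z ∈ gridSet d (N + 1),
          (Ψ (A.Deps (N + 1) Z q (gridPt (N + 1) z)) - G (gridPt (N + 1) z)) := by
      rw [hShomdef, hSGdef]
      simp only
      rw [Finset.sum_sub_distrib, mul_sub]
    have hpow1 : (((N + 1 : ℕ) : ℝ)) ^ d * (((N + 1 : ℕ) : ℝ)⁻¹) ^ d = 1 := by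
      rw [← mul_pow, mul_inv_cancel₀ (ne_of_gt hN''), one_pow]
    rw [Real.dist_eq, sub_zero, hexp2, abs_mul,
      abs_of_nonneg (by positivity : (0:ℝ) ≤ (((N + 1 : ℕ) : ℝ)⁻¹) ^ d)]
    calc (((N + 1 : ℕ) : ℝ)⁻¹) ^ d * |∑ z ∈ gridSet d (N + 1),
        (Ψ (A.Deps (N + 1) Z q (gridPt (N + 1) z)) - G (gridPt (N + 1) z))|
        ≤ (((N + 1 : ℕ) : ℝ)⁻¹) ^ d * ∑ z ∈ gridSet d (N + 1),
          |Ψ (A.Deps (N + 1) Z q (gridPt (N + 1) z)) - G (gridPt (N + 1) z)| :=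
          mul_le_mul_of_nonneg_left (Finset.abs_sum_le_sum_abs _ _) (by positivity)
      _ ≤ (((N + 1 : ℕ) : ℝ)⁻¹) ^ d * ((gridSet d (N + 1)).card • (δ / 2)) :=
          mul_le_mul_of_nonneg_left (Finset.sum_le_card_nsmul _ _ _ hterm) (by positivity)
      _ = (((N + 1 : ℕ) : ℝ)⁻¹) ^ d * (((N + 1 : ℕ) : ℝ)) ^ d * (δ / 2) := by
          rw [CBH.card_gridSet, nsmul_eq_mul]
          push_cast
          ring
      _ = δ / 2 := by rw [mul_comm ((((N + 1 : ℕ) : ℝ)⁻¹) ^ d), hpow1, one_mul]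
      _ < δ := by linarith
  -- assemble
  have heq : (fun N : ℕ => A.d2Eaeps (N + 1) Z q - A.d2EcΩ Z q)
      = fun N : ℕ => (A.d2Eaeps (N + 1) Z q - Shom (N + 1))
        + ((Shom (N + 1) - SG (N + 1)) + (SG (N + 1) - A.d2EcΩ Z q)) := by
    funext N
    ring
  rw [heq]
  have htot := h1.add (h2.add h3)
  simpa using htot
end
end

section
/- Suppose there exists a displacement u ∈ 𝒰 and γ_a > 0 such that ⟨δ²E^a(u)v, v⟩ ≥ γ_a ‖v‖_{a1}² for all v ∈ 𝒰_0. Then the homogeneous reference configuration is also stable: ⟨δ²E^a_hom(0)v, v⟩ ≥ γ_a ‖v‖_{a1}² for all v ∈ 𝒰_0. -/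
open scoped BigOperators
noncomputable section

/-- Lemma: lattice stability.
If there exists any finite-energy displacement `u` at which the defective
energy Hessian is coercive, `⟨δ²E^a(u)v, v⟩ ≥ γ_a ‖v‖_{a1}²` for all test
displacements `v ∈ 𝒰_0`, then the homogeneous reference configuration is
stable with the same constant: `⟨δ²E^a_hom(0)v, v⟩ ≥ γ_a ‖v‖_{a1}²` for all
`v ∈ 𝒰_0`. -/
theorem defect_stability_implies_homogeneous_stability {d S n : ℕ}
    (A : MLSetting d S n) (γa : ℝ) (hγa : 0 < γa)
    (h : ∃ u : Disp d S n, A.FiniteEnergy u ∧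
      ∀ v : Disp d S n, A.InU0 v → γa * A.a1normSq v ≤ A.d2E u v v) :
    ∀ v : Disp d S n, A.InU0 v → γa * A.a1normSq v ≤ A.d2Ehom 0 v v := by
  classical
  obtain ⟨u, hu, hstab⟩ := h
  intro v hv
  obtain ⟨T, hT⟩ := hv
  -- support set for Dm v
  set K : Finset (ZLat d) := T ∪ A.R1.biUnion (fun ρ => T.image (fun ξ => ξ - ρ)) with hKdef
  have hsupp : ∀ ξ : ZLat d, ξ ∉ K → A.Dm v ξ = 0 := by
    intro ξ hξ
    have hξT : ξ ∉ T := fun h' => hξ (Finset.mem_union_left _ h')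
    funext e
    obtain ⟨⟨ρ, α, β⟩, he⟩ := e
    have hρ : ρ ∈ A.R1 := Finset.mem_image.2 ⟨(ρ, α, β), he, rfl⟩
    have hξρ : ξ + ρ ∉ T := by
      intro h'
      apply hξ
      refine Finset.mem_union_right _ (Finset.mem_biUnion.2 ⟨ρ, hρ, Finset.mem_image.2 ⟨ξ + ρ, h', ?_⟩⟩)
      simp
    have h1 := hT ξ hξT
    have h2 := hT (ξ + ρ) hξρ
    show v (ξ + ρ) β - v ξ α = 0
    rw [h2.2 β, h1.2 α, h1.1 ρ hρ, sub_self]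
  have hDmtrans : ∀ (t ξ : ZLat d), A.Dm (fun ζ α => v (ζ - t) α) ξ = A.Dm v (ξ - t) := by
    intro t ξ
    funext e
    show v (ξ + e.1.1 - t) e.1.2.2 - v (ξ - t) e.1.2.1
      = v (ξ - t + e.1.1) e.1.2.2 - v (ξ - t) e.1.2.1
    rw [add_sub_right_comm]
  have hInU0 : ∀ t : ZLat d, A.InU0 (fun ζ α => v (ζ - t) α) := by
    intro t
    refine ⟨T.image (fun ξ => ξ + t), fun ξ hξ => ?_⟩
    have hξT : ξ - t ∉ T := by
      intro h'
      exact hξ (Finset.mem_image.2 ⟨ξ - t, h', by simp⟩)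
    obtain ⟨h1, h2⟩ := hT (ξ - t) hξT
    refine ⟨fun ρ hρ => ?_, fun α => h2 α⟩
    show v (ξ + ρ - t) A.idx0 = v (ξ - t) A.idx0
    rw [add_sub_right_comm]; exact h1 ρ hρ
  have hnorm : ∀ t : ZLat d, A.a1normSq (fun ζ α => v (ζ - t) α) = A.a1normSq v := by
    intro t
    unfold MLSetting.a1normSq
    simp only [hDmtrans]
    exact (Equiv.subRight t).tsum_eq (fun ξ => ∑ e : ↥A.R, ‖A.Dm v ξ e‖ ^ 2)
  have hzero2 : ∀ (f : (↥A.R → Vec n) → ℝ) (g : ↥A.R → Vec n) (ξ : ZLat d), ξ ∉ K →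
      iteratedFDeriv ℝ 2 f g ![A.Dm v ξ, A.Dm v ξ] = 0 := by
    intro f g ξ hξ
    exact ContinuousMultilinearMap.map_coord_zero _ (0 : Fin 2) (by simp [hsupp ξ hξ])
  have hd2E : ∀ t : ZLat d, A.d2E u (fun ζ α => v (ζ - t) α) (fun ζ α => v (ζ - t) α)
      = ∑ ζ ∈ K, iteratedFDeriv ℝ 2 (A.Vsite (ζ + t)) (A.yvec + A.Dm u (ζ + t))
          ![A.Dm v ζ, A.Dm v ζ] := by
    intro t
    unfold MLSetting.d2E
    simp only [hDmtrans]
    rw [← (Equiv.addRight t).tsum_eq (fun ξ => iteratedFDeriv ℝ 2 (A.Vsite ξ)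
      (A.yvec + A.Dm u ξ) ![A.Dm v (ξ - t), A.Dm v (ξ - t)])]
    simp only [Equiv.coe_addRight, add_sub_cancel_right]
    exact tsum_eq_sum (fun ζ hζ => hzero2 _ _ ζ hζ)
  have hDm0 : ∀ ξ : ZLat d, A.Dm (0 : Disp d S n) ξ = 0 := by
    intro ξ; funext e
    show (0 : Disp d S n) (ξ + e.1.1) e.1.2.2 - (0 : Disp d S n) ξ e.1.2.1 = 0
    simp
  have hd2Ehom : A.d2Ehom 0 v v
      = ∑ ζ ∈ K, iteratedFDeriv ℝ 2 A.Vhom A.yvec ![A.Dm v ζ, A.Dm v ζ] := by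
    unfold MLSetting.d2Ehom
    simp only [hDm0, add_zero]
    exact tsum_eq_sum (fun ζ hζ => hzero2 _ _ ζ hζ)
  -- the translation sequence
  have hdpos : 0 < d := by rcases A.hd with h | h <;> omega
  set t : ℕ → ZLat d := fun k _ => (k : ℤ) with htdef
  -- Dm u (ζ + t k) → 0
  have hwlim : ∀ ζ : ZLat d, Filter.Tendsto (fun k => A.Dm u (ζ + t k))
      Filter.atTop (nhds 0) := by
    intro ζ
    have hinj : Function.Injective (fun k : ℕ => ζ + t k) := by
      intro a b hab
      have h' : ζ ⟨0, hdpos⟩ + (a : ℤ) = ζ ⟨0, hdpos⟩ + (b : ℤ) := congrFun hab ⟨0, hdpos⟩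
      omega
    have hcof : Filter.Tendsto (fun k => ζ + t k) Filter.atTop Filter.cofinite := by
      rw [← Nat.cofinite_eq_atTop]; exact hinj.tendsto_cofinite
    have hsum0 : Filter.Tendsto (fun ξ : ZLat d => ∑ e : ↥A.R, ‖A.Dm u ξ e‖ ^ 2)
        Filter.cofinite (nhds 0) := hu.tendsto_cofinite_zero
    have hDmcof : Filter.Tendsto (fun ξ : ZLat d => A.Dm u ξ) Filter.cofinite (nhds 0) := by
      rw [tendsto_pi_nhds]
      intro e
      show Filter.Tendsto (fun ξ : ZLat d => A.Dm u ξ e) Filter.cofinite (nhds 0)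
      rw [tendsto_zero_iff_norm_tendsto_zero]
      have hsq : Filter.Tendsto (fun ξ : ZLat d => ‖A.Dm u ξ e‖ ^ 2)
          Filter.cofinite (nhds 0) := by
        apply squeeze_zero (fun ξ => by positivity) (fun ξ => ?_) hsum0
        exact Finset.single_le_sum (f := fun e : ↥A.R => ‖A.Dm u ξ e‖ ^ 2)
          (fun i _ => by positivity) (Finset.mem_univ e)
      have := (Real.continuous_sqrt.tendsto 0).comp hsq
      simp only [Real.sqrt_zero] at this
      refine this.congr (fun ξ => ?_)
      simp [Real.sqrt_sq (norm_nonneg _)]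
    exact hDmcof.comp hcof
  -- far away, the potential is homogeneous
  have hVev : ∀ ζ : ZLat d, ∀ᶠ k in Filter.atTop, A.Vsite (ζ + t k) = A.Vhom := by
    intro ζ
    set wv : Vec d := WithLp.toLp 2 (fun i => ∑ j, A.F i j) with hwv
    have hwvne : wv ≠ 0 := by
      intro h0
      have hdet : A.F.det ≠ 0 := by rw [A.hdetF]; norm_num
      have hmv : A.F.mulVec (fun _ => (1 : ℝ)) = 0 := by
        funext i
        have := congrArg (fun w : Vec d => w i) h0
        simpa [Matrix.mulVec, dotProduct, hwv] using this
      have := Matrix.eq_zero_of_mulVec_eq_zero hdet hmv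
      have h1 := congrFun this ⟨0, hdpos⟩
      norm_num at h1
    have hlat : ∀ k : ℕ, latpos A.F (ζ + t k) = latpos A.F ζ + (k : ℝ) • wv := by
      intro k
      ext i
      show (∑ j, A.F i j * ((ζ j + (k : ℤ) : ℤ) : ℝ))
        = (∑ j, A.F i j * (ζ j : ℝ)) + (k : ℝ) * ∑ j, A.F i j
      push_cast
      rw [Finset.mul_sum, ← Finset.sum_add_distrib]
      congr 1; funext j; ring
    have hc : 0 < ‖wv‖ := norm_pos_iff.2 hwvne
    obtain ⟨N, hN⟩ := exists_nat_ge ((A.Rdef + ‖latpos A.F ζ‖) / ‖wv‖)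
    rw [Filter.eventually_atTop]
    refine ⟨N, fun k hk => ?_⟩
    apply A.hVsite_hom
    rw [hlat k]
    have hk' : (A.Rdef + ‖latpos A.F ζ‖) / ‖wv‖ ≤ (k : ℝ) :=
      hN.trans (by exact_mod_cast hk)
    have hkc : A.Rdef + ‖latpos A.F ζ‖ ≤ (k : ℝ) * ‖wv‖ :=
      (div_le_iff₀ hc).mp hk'
    have htri := norm_sub_le (latpos A.F ζ + (k : ℝ) • wv) (latpos A.F ζ)
    rw [add_sub_cancel_left] at htri
    have hnsmul : ‖(k : ℝ) • wv‖ = (k : ℝ) * ‖wv‖ := by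
      rw [norm_smul]; simp
    linarith
  -- per-term convergence
  have hterm : ∀ ζ ∈ K, Filter.Tendsto
      (fun k => iteratedFDeriv ℝ 2 (A.Vsite (ζ + t k)) (A.yvec + A.Dm u (ζ + t k))
        ![A.Dm v ζ, A.Dm v ζ]) Filter.atTop
      (nhds (iteratedFDeriv ℝ 2 A.Vhom A.yvec ![A.Dm v ζ, A.Dm v ζ])) := by
    intro ζ _
    have hcont : Continuous (fun g : ↥A.R → Vec n =>
        iteratedFDeriv ℝ 2 A.Vhom g ![A.Dm v ζ, A.Dm v ζ]) :=
      (continuous_eval_const _).comp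
        (A.hVhom_smooth.continuous_iteratedFDeriv (by norm_num))
    have harg : Filter.Tendsto (fun k => A.yvec + A.Dm u (ζ + t k)) Filter.atTop
        (nhds A.yvec) := by
      have := (tendsto_const_nhds (x := A.yvec) (f := Filter.atTop (α := ℕ))).add (hwlim ζ)
      simpa using this
    have h1 : Filter.Tendsto (fun k =>
        iteratedFDeriv ℝ 2 A.Vhom (A.yvec + A.Dm u (ζ + t k)) ![A.Dm v ζ, A.Dm v ζ])
        Filter.atTop (nhds (iteratedFDeriv ℝ 2 A.Vhom A.yvec ![A.Dm v ζ, A.Dm v ζ])) :=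
      (hcont.tendsto _).comp harg
    refine h1.congr' ?_
    filter_upwards [hVev ζ] with k hk
    rw [hk]
  have hsumlim : Filter.Tendsto (fun k => ∑ ζ ∈ K,
      iteratedFDeriv ℝ 2 (A.Vsite (ζ + t k)) (A.yvec + A.Dm u (ζ + t k))
        ![A.Dm v ζ, A.Dm v ζ]) Filter.atTop
      (nhds (∑ ζ ∈ K, iteratedFDeriv ℝ 2 A.Vhom A.yvec ![A.Dm v ζ, A.Dm v ζ])) :=
    tendsto_finset_sum _ hterm
  have hineq : ∀ k : ℕ, γa * A.a1normSq v ≤ ∑ ζ ∈ K,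
      iteratedFDeriv ℝ 2 (A.Vsite (ζ + t k)) (A.yvec + A.Dm u (ζ + t k))
        ![A.Dm v ζ, A.Dm v ζ] := by
    intro k
    rw [← hnorm (t k), ← hd2E (t k)]
    exact hstab _ (hInU0 (t k))
  rw [hd2Ehom]
  exact ge_of_tendsto' hsumlim hineq
end
end
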